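/- arXiv:1007.3931 — 5 statements merged into one kernel-verified Lean document; each statement's English description precedes it below -/
import Mathlib

section
/- Let n ≥ 1 and let A, B, S be real n×n matrices such that: S is symmetric and positive definite; the product S·A is a symmetric matrix; and there exists α > 0 such that vᵀ S B v ≥ α‖v‖² for every v ∈ ℝⁿ. Then B is invertible, and every root z ∈ ℂ of the characteristic polynomial of B⁻¹A with Re z = 0 satisfies z = 0. In particular, if A is invertible, then every eigenvalue of B⁻¹A has nonzero real part. -/
open Matrix Polynomial

private lemma re_form {n : ℕ} (C : Matrix (Fin n) (Fin n) ℝ) (v : Fin n → ℂ) :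
    (star v ⬝ᵥ ((C.map (algebraMap ℝ ℂ)) *ᵥ v)).re =
      (fun i => (v i).re) ⬝ᵥ (C *ᵥ fun i => (v i).re) +
      (fun i => (v i).im) ⬝ᵥ (C *ᵥ fun i => (v i).im) := by
  simp only [dotProduct, mulVec, Matrix.map_apply, Pi.star_apply, Complex.re_sum,
    Complex.im_sum, Complex.mul_re, Complex.mul_im, Finset.mul_sum]
  rw [← Finset.sum_add_distrib]
  refine Finset.sum_congr rfl fun i _ => ?_
  rw [← Finset.sum_add_distrib]
  refine Finset.sum_congr rfl fun j _ => ?_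
  simp [Complex.mul_re, Complex.mul_im]

private lemma im_form {n : ℕ} (C : Matrix (Fin n) (Fin n) ℝ) (v : Fin n → ℂ) :
    (star v ⬝ᵥ ((C.map (algebraMap ℝ ℂ)) *ᵥ v)).im =
      (fun i => (v i).re) ⬝ᵥ (C *ᵥ fun i => (v i).im) -
      (fun i => (v i).im) ⬝ᵥ (C *ᵥ fun i => (v i).re) := by
  simp only [dotProduct, mulVec, Matrix.map_apply, Pi.star_apply, Complex.re_sum,
    Complex.im_sum, Complex.mul_re, Complex.mul_im, Finset.mul_sum]
  rw [← Finset.sum_sub_distrib]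
  refine Finset.sum_congr rfl fun i _ => ?_
  rw [← Finset.sum_sub_distrib]
  refine Finset.sum_congr rfl fun j _ => ?_
  simp [Complex.mul_re, Complex.mul_im]
  ring

private lemma symm_dot {n : ℕ} (C : Matrix (Fin n) (Fin n) ℝ) (hC : C.IsSymm)
    (x y : Fin n → ℝ) : x ⬝ᵥ (C *ᵥ y) = y ⬝ᵥ (C *ᵥ x) := by
  rw [Matrix.dotProduct_mulVec, ← Matrix.mulVec_transpose, hC.eq, dotProduct_comm]

/-- If `S` is symmetric positive definite, `S * A` is symmetric and `B`
satisfies the dissipativity condition `vᵀ S B v ≥ α ‖v‖²` for some `α > 0`, then `B` is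
invertible, every root `z` of the characteristic polynomial of `B⁻¹ * A` over `ℂ` with
`Re z = 0` satisfies `z = 0`; in particular, if `A` is invertible then every eigenvalue of
`B⁻¹ * A` has nonzero real part. -/
theorem no_purely_imaginary_eigenvalue (n : ℕ) (hn : 1 ≤ n)
    (A B S : Matrix (Fin n) (Fin n) ℝ)
    (hS : S.PosDef)
    (hSA : (S * A).IsSymm)
    (α : ℝ) (hα : 0 < α)
    (hdiss : ∀ v : Fin n → ℝ, α * (v ⬝ᵥ v) ≤ v ⬝ᵥ ((S * B) *ᵥ v)) :
    IsUnit B.det ∧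
    (∀ z ∈ ((B⁻¹ * A).charpoly.map (algebraMap ℝ ℂ)).roots, z.re = 0 → z = 0) ∧
    (IsUnit A.det →
      ∀ z ∈ ((B⁻¹ * A).charpoly.map (algebraMap ℝ ℂ)).roots, z.re ≠ 0) := by
  -- B is invertible
  have hBdet : IsUnit B.det := by
    rw [isUnit_iff_ne_zero]
    intro hdet
    obtain ⟨v, hv0, hv⟩ := (Matrix.exists_mulVec_eq_zero_iff).2 hdet
    have h1 := hdiss v
    rw [← Matrix.mulVec_mulVec, hv, Matrix.mulVec_zero, dotProduct_zero] at h1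
    have h2 : 0 ≤ v ⬝ᵥ v := Finset.sum_nonneg fun i _ => mul_self_nonneg (v i)
    have h3 : v ⬝ᵥ v = 0 := le_antisymm (by nlinarith) h2
    exact hv0 (dotProduct_self_eq_zero.1 h3)
  -- main claim
  have key : ∀ z ∈ ((B⁻¹ * A).charpoly.map (algebraMap ℝ ℂ)).roots, z.re = 0 → z = 0 := by
    intro z hz hre
    set M' : Matrix (Fin n) (Fin n) ℂ := (B⁻¹ * A).map (algebraMap ℝ ℂ) with hM'
    have hchar : (B⁻¹ * A).charpoly.map (algebraMap ℝ ℂ) = M'.charpoly :=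
      (Matrix.charpoly_map _ _).symm
    have hroot : M'.charpoly.IsRoot z := by
      rw [← hchar]; exact isRoot_of_mem_roots hz
    have hcm : (Matrix.charmatrix M').map (Polynomial.eval z) =
        Matrix.diagonal (fun _ => z) - M' := by
      ext i j
      by_cases h : i = j <;>
        simp [Matrix.charmatrix_apply, Matrix.diagonal, h]
    have hdet : (Matrix.diagonal (fun _ : Fin n => z) - M').det = 0 := by
      have h0 : Polynomial.eval z M'.charpoly = 0 := hroot
      rw [Matrix.charpoly] at h0
      rw [← hcm]
      calc ((Matrix.charmatrix M').map (Polynomial.eval z)).det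
          = Polynomial.eval z (Matrix.charmatrix M').det :=
            (RingHom.map_det (Polynomial.evalRingHom z) _).symm
        _ = 0 := h0
    obtain ⟨v, hv0, hv⟩ := (Matrix.exists_mulVec_eq_zero_iff).2 hdet
    have hvM : M' *ᵥ v = z • v := by
      rw [Matrix.sub_mulVec] at hv
      have h2 : (Matrix.diagonal (fun _ : Fin n => z)) *ᵥ v = z • v := by
        ext i; simp [Matrix.mulVec_diagonal]
      rw [h2, sub_eq_zero] at hv
      exact hv.symm
    have hBM : (B.map (algebraMap ℝ ℂ)) * M' = A.map (algebraMap ℝ ℂ) := by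
      rw [hM', ← Matrix.map_mul, ← mul_assoc, Matrix.mul_nonsing_inv B hBdet, one_mul]
    have hAv : (A.map (algebraMap ℝ ℂ)) *ᵥ v = z • ((B.map (algebraMap ℝ ℂ)) *ᵥ v) := by
      rw [← hBM, ← Matrix.mulVec_mulVec, hvM, Matrix.mulVec_smul]
    have hq : star v ⬝ᵥ (((S * A).map (algebraMap ℝ ℂ)) *ᵥ v) =
        z * (star v ⬝ᵥ (((S * B).map (algebraMap ℝ ℂ)) *ᵥ v)) := by
      rw [Matrix.map_mul, Matrix.map_mul, ← Matrix.mulVec_mulVec, ← Matrix.mulVec_mulVec,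
        hAv, Matrix.mulVec_smul, dotProduct_smul, smul_eq_mul]
    have hAim : (star v ⬝ᵥ (((S * A).map (algebraMap ℝ ℂ)) *ᵥ v)).im = 0 := by
      rw [im_form, symm_dot _ hSA, sub_self]
    set x := fun i => (v i).re with hx
    set y := fun i => (v i).im with hy
    have hBre : 0 < (star v ⬝ᵥ (((S * B).map (algebraMap ℝ ℂ)) *ᵥ v)).re := by
      rw [re_form]
      have hdx := hdiss x
      have hdy := hdiss y
      have hxy : 0 < x ⬝ᵥ x + y ⬝ᵥ y := by
        have hxn : 0 ≤ x ⬝ᵥ x := Finset.sum_nonneg fun i _ => mul_self_nonneg (x i)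
        have hyn : 0 ≤ y ⬝ᵥ y := Finset.sum_nonneg fun i _ => mul_self_nonneg (y i)
        rcases eq_or_lt_of_le hxn with hx0 | hx0
        · rcases eq_or_lt_of_le hyn with hy0 | hy0
          · exfalso
            apply hv0
            have hx' := dotProduct_self_eq_zero.1 hx0.symm
            have hy' := dotProduct_self_eq_zero.1 hy0.symm
            ext i
            have : x i = 0 := congrFun hx' i
            have : y i = 0 := congrFun hy' i
            exact Complex.ext (congrFun hx' i) (congrFun hy' i)
          · linarith
        · linarith
      nlinarith
    have him : (star v ⬝ᵥ (((S * A).map (algebraMap ℝ ℂ)) *ᵥ v)).im =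
        z.re * (star v ⬝ᵥ (((S * B).map (algebraMap ℝ ℂ)) *ᵥ v)).im +
        z.im * (star v ⬝ᵥ (((S * B).map (algebraMap ℝ ℂ)) *ᵥ v)).re := by
      rw [hq]; exact Complex.mul_im _ _
    rw [hAim, hre] at him
    have hzim : z.im = 0 := by
      have : z.im * (star v ⬝ᵥ (((S * B).map (algebraMap ℝ ℂ)) *ᵥ v)).re = 0 := by
        linarith
      exact (mul_eq_zero.1 this).resolve_right (ne_of_gt hBre)
    exact Complex.ext hre hzim
  refine ⟨hBdet, key, ?_⟩
  intro hA z hz hre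
  have hz0 := key z hz hre
  subst hz0
  have hroot : ((B⁻¹ * A).charpoly.map (algebraMap ℝ ℂ)).IsRoot 0 := isRoot_of_mem_roots hz
  have hc0 : (B⁻¹ * A).charpoly.coeff 0 = 0 := by
    have : (algebraMap ℝ ℂ) ((B⁻¹ * A).charpoly.coeff 0) = 0 := by
      rw [← Polynomial.coeff_map, Polynomial.coeff_zero_eq_eval_zero]
      exact hroot
    exact_mod_cast (map_eq_zero_iff _ (algebraMap ℝ ℂ).injective).1 this
  have hdetM : (B⁻¹ * A).det = 0 := by
    rw [Matrix.det_eq_sign_charpoly_coeff, hc0, mul_zero]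
  have : IsUnit (B⁻¹ * A).det := by
    rw [Matrix.det_mul]
    exact (Matrix.isUnit_nonsing_inv_det B hBdet).mul hA
  rw [hdetM] at this
  exact (isUnit_iff_ne_zero.1 this) rfl
end

section
/- Let a < b < c be real numbers and let f : ℝ → ℝ be continuous on [a,c]. Suppose that the convex envelope conv_{[a,b]} f is constant on [a,b] and that the convex envelope conv_{[b,c]} f is monotone nondecreasing on [b,c]. Then the convex envelope of f on the full interval [a,c] is the glued function: conv_{[a,c]} f(τ) = conv_{[a,b]} f(τ) for every τ ∈ [a,b], and conv_{[a,c]} f(τ) = conv_{[b,c]} f(τ) for every τ ∈ [b,c]. -/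
open Set

/-- The convex envelope of `f` on the interval `[a,b]`:
`conv_{[a,b]} f (τ) = sup { g τ : g convex on [a,b], g ≤ f on [a,b] }`. -/
noncomputable def convEnv (a b : ℝ) (f : ℝ → ℝ) (τ : ℝ) : ℝ :=
  sSup {y : ℝ | ∃ g : ℝ → ℝ, ConvexOn ℝ (Set.Icc a b) g ∧
    (∀ z ∈ Set.Icc a b, g z ≤ f z) ∧ g τ = y}

/-- The set whose supremum defines `convEnv`. -/
def envSet (a b : ℝ) (f : ℝ → ℝ) (τ : ℝ) : Set ℝ :=
  {y : ℝ | ∃ g : ℝ → ℝ, ConvexOn ℝ (Set.Icc a b) g ∧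
    (∀ z ∈ Set.Icc a b, g z ≤ f z) ∧ g τ = y}

lemma convEnv_def (a b : ℝ) (f : ℝ → ℝ) (τ : ℝ) :
    convEnv a b f τ = sSup (envSet a b f τ) := rfl

lemma envSet_bddAbove {a b : ℝ} (f : ℝ → ℝ) {τ : ℝ} (hτ : τ ∈ Icc a b) :
    BddAbove (envSet a b f τ) := by
  refine ⟨f τ, ?_⟩
  rintro y ⟨g, _, hgle, rfl⟩
  exact hgle τ hτ

lemma envSet_nonempty {a b : ℝ} (hab : a ≤ b) {f : ℝ → ℝ}
    (hf : ContinuousOn f (Icc a b)) (τ : ℝ) : (envSet a b f τ).Nonempty := by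
  obtain ⟨x0, hx0, hmin⟩ := isCompact_Icc.exists_isMinOn (nonempty_Icc.2 hab) hf
  exact ⟨f x0, fun _ => f x0, convexOn_const _ (convex_Icc a b),
    fun z hz => isMinOn_iff.mp hmin z hz, rfl⟩

lemma le_convEnv {a b : ℝ} {f g : ℝ → ℝ} (hg : ConvexOn ℝ (Icc a b) g)
    (hgle : ∀ z ∈ Icc a b, g z ≤ f z) {τ : ℝ} (hτ : τ ∈ Icc a b) :
    g τ ≤ convEnv a b f τ := by
  rw [convEnv_def]
  exact le_csSup (envSet_bddAbove f hτ) ⟨g, hg, hgle, rfl⟩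

lemma convEnv_le {a b : ℝ} (hab : a ≤ b) {f : ℝ → ℝ}
    (hf : ContinuousOn f (Icc a b)) {τ : ℝ} (hτ : τ ∈ Icc a b) :
    convEnv a b f τ ≤ f τ := by
  rw [convEnv_def]
  refine csSup_le (envSet_nonempty hab hf τ) ?_
  rintro y ⟨g, _, hgle, rfl⟩
  exact hgle τ hτ

lemma affine_convexOn (s : Set ℝ) (hs : Convex ℝ s) (m c : ℝ) :
    ConvexOn ℝ s (fun x => m * x + c) := by
  refine ⟨hs, fun x _ y _ p q hp hq hpq => ?_⟩
  simp only [smul_eq_mul]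
  refine le_of_eq ?_
  linear_combination (-c) * hpq

lemma convexOn_convEnv {a b : ℝ} (hab : a ≤ b) {f : ℝ → ℝ}
    (hf : ContinuousOn f (Icc a b)) : ConvexOn ℝ (Icc a b) (convEnv a b f) := by
  refine ⟨convex_Icc a b, fun x hx y hy p q hp hq hpq => ?_⟩
  rw [convEnv_def]
  refine csSup_le (envSet_nonempty hab hf _) ?_
  rintro w ⟨g, hgc, hgle, rfl⟩
  have h1 : g x ≤ convEnv a b f x := le_convEnv hgc hgle hx
  have h2 : g y ≤ convEnv a b f y := le_convEnv hgc hgle hy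
  have h3 := hgc.2 hx hy hp hq hpq
  simp only [smul_eq_mul] at h3 ⊢
  nlinarith [mul_le_mul_of_nonneg_left h1 hp, mul_le_mul_of_nonneg_left h2 hq]

/-- The convex envelope agrees with `f` at the right endpoint. -/
lemma convEnv_right_endpoint {a b : ℝ} (hab : a ≤ b) {f : ℝ → ℝ}
    (hf : ContinuousOn f (Icc a b)) : convEnv a b f b = f b := by
  have hb : b ∈ Icc a b := ⟨hab, le_rfl⟩
  refine le_antisymm (convEnv_le hab hf hb) ?_
  by_contra h
  push_neg at h
  set ε := (f b - convEnv a b f b) / 2 with hε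
  have hε0 : 0 < ε := by rw [hε]; linarith
  have hc : ContinuousWithinAt f (Icc a b) b := hf b hb
  rw [Metric.continuousWithinAt_iff] at hc
  obtain ⟨δ, hδ, hδ'⟩ := hc ε hε0
  obtain ⟨x0, hx0, hmin⟩ := isCompact_Icc.exists_isMinOn (nonempty_Icc.2 hab) hf
  set m := f x0 with hm
  set M : ℝ := max 0 ((f b - ε - m) / δ) with hM
  have hM0 : 0 ≤ M := le_max_left _ _
  set g : ℝ → ℝ := fun x => M * x + (f b - ε - M * b) with hg
  have hgb : g b = f b - ε := by simp only [hg]; ring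
  have hgle : ∀ z ∈ Icc a b, g z ≤ f z := by
    intro z hz
    by_cases hzd : b - z < δ
    · have hd : dist z b < δ := by
        rw [Real.dist_eq, abs_sub_comm, abs_of_nonneg (by linarith [hz.2])]
        exact hzd
      have hfz := hδ' hz hd
      rw [Real.dist_eq] at hfz
      have h1 : f b - ε < f z := by
        have := abs_lt.mp hfz
        linarith [this.1]
      have h2 : M * z ≤ M * b := mul_le_mul_of_nonneg_left hz.2 hM0
      simp only [hg]
      linarith
    · push_neg at hzd
      have h1 : (f b - ε - m) / δ ≤ M := le_max_right _ _
      have h2 : f b - ε - m ≤ M * δ := (div_le_iff₀ hδ).mp h1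
      have h3 : M * δ ≤ M * (b - z) := mul_le_mul_of_nonneg_left hzd hM0
      have h4 : m ≤ f z := isMinOn_iff.mp hmin z hz
      simp only [hg]
      nlinarith
  have hmem : f b - ε ≤ convEnv a b f b := by
    rw [← hgb]
    exact le_convEnv (affine_convexOn _ (convex_Icc a b) _ _) hgle hb
  rw [hε] at hmem
  linarith
/-- The convex envelope agrees with `f` at the left endpoint. -/
lemma convEnv_left_endpoint {a b : ℝ} (hab : a ≤ b) {f : ℝ → ℝ}
    (hf : ContinuousOn f (Icc a b)) : convEnv a b f a = f a := by
  have ha : a ∈ Icc a b := ⟨le_rfl, hab⟩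
  refine le_antisymm (convEnv_le hab hf ha) ?_
  by_contra h
  push_neg at h
  set ε := (f a - convEnv a b f a) / 2 with hε
  have hε0 : 0 < ε := by rw [hε]; linarith
  have hc : ContinuousWithinAt f (Icc a b) a := hf a ha
  rw [Metric.continuousWithinAt_iff] at hc
  obtain ⟨δ, hδ, hδ'⟩ := hc ε hε0
  obtain ⟨x0, hx0, hmin⟩ := isCompact_Icc.exists_isMinOn (nonempty_Icc.2 hab) hf
  set m := f x0 with hm
  set M : ℝ := max 0 ((f a - ε - m) / δ) with hM
  have hM0 : 0 ≤ M := le_max_left _ _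
  set g : ℝ → ℝ := fun x => (-M) * x + (f a - ε + M * a) with hg
  have hga : g a = f a - ε := by simp only [hg]; ring
  have hgle : ∀ z ∈ Icc a b, g z ≤ f z := by
    intro z hz
    by_cases hzd : z - a < δ
    · have hd : dist z a < δ := by
        rw [Real.dist_eq, abs_of_nonneg (by linarith [hz.1])]
        exact hzd
      have hfz := hδ' hz hd
      rw [Real.dist_eq] at hfz
      have h1 : f a - ε < f z := by
        have := abs_lt.mp hfz
        linarith [this.1]
      have h2 : M * a ≤ M * z := mul_le_mul_of_nonneg_left hz.1 hM0
      simp only [hg]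
      linarith
    · push_neg at hzd
      have h1 : (f a - ε - m) / δ ≤ M := le_max_right _ _
      have h2 : f a - ε - m ≤ M * δ := (div_le_iff₀ hδ).mp h1
      have h3 : M * δ ≤ M * (z - a) := mul_le_mul_of_nonneg_left hzd hM0
      have h4 : m ≤ f z := isMinOn_iff.mp hmin z hz
      simp only [hg]
      nlinarith
  have hmem : f a - ε ≤ convEnv a b f a := by
    rw [← hga]
    exact le_convEnv (affine_convexOn _ (convex_Icc a b) _ _) hgle ha
  rw [hε] at hmem
  linarith

/-- gluing of convex envelopes, Step 4 of the proof of Lemma 3.2. If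
`conv_{[a,b]} f` is constant on `[a,b]` and `conv_{[b,c]} f` is nondecreasing on `[b,c]`,
then the convex envelope of `f` on `[a,c]` is obtained by gluing the two envelopes. -/
theorem convEnv_glue (a b c : ℝ) (hab : a < b) (hbc : b < c) (f : ℝ → ℝ)
    (hf : ContinuousOn f (Set.Icc a c))
    (hconst : ∃ k : ℝ, ∀ τ ∈ Set.Icc a b, convEnv a b f τ = k)
    (hmono : MonotoneOn (convEnv b c f) (Set.Icc b c)) :
    (∀ τ ∈ Set.Icc a b, convEnv a c f τ = convEnv a b f τ) ∧
    (∀ τ ∈ Set.Icc b c, convEnv a c f τ = convEnv b c f τ) := by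
  obtain ⟨k, hk⟩ := hconst
  have hac : a ≤ c := hab.le.trans hbc.le
  have hsub1 : Icc a b ⊆ Icc a c := Icc_subset_Icc_right hbc.le
  have hsub2 : Icc b c ⊆ Icc a c := Icc_subset_Icc_left hab.le
  have hf1 : ContinuousOn f (Icc a b) := hf.mono hsub1
  have hf2 : ContinuousOn f (Icc b c) := hf.mono hsub2
  have hbmem1 : b ∈ Icc a b := ⟨hab.le, le_rfl⟩
  have hbmem2 : b ∈ Icc b c := ⟨le_rfl, hbc.le⟩
  have hE1b : convEnv a b f b = f b := convEnv_right_endpoint hab.le hf1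
  have hE2b : convEnv b c f b = f b := convEnv_left_endpoint hbc.le hf2
  have hkfb : k = f b := by rw [← hk b hbmem1, hE1b]
  have hE2conv : ConvexOn ℝ (Icc b c) (convEnv b c f) := convexOn_convEnv hbc.le hf2
  set E2 := convEnv b c f with hE2def
  set G : ℝ → ℝ := fun τ => if τ ≤ b then f b else E2 τ with hGdef
  have hGeq : ∀ x, x ≤ b → G x = f b := by
    intro x hx; simp [hGdef, hx]
  have hGeq' : ∀ x, b < x → G x = E2 x := by
    intro x hx; simp [hGdef, not_le.2 hx]
  have hGE2 : ∀ x ∈ Icc b c, G x = E2 x := by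
    intro x hx
    rcases lt_or_ge b x with h | h
    · exact hGeq' x h
    · have hxb : x = b := le_antisymm h hx.1
      rw [hxb, hGeq b le_rfl, hE2b]
  -- G ≤ f on [a,c]
  have hGle : ∀ z ∈ Icc a c, G z ≤ f z := by
    intro z hz
    rcases le_or_gt z b with hzb | hzb
    · have hz1 : z ∈ Icc a b := ⟨hz.1, hzb⟩
      have h := convEnv_le hab.le hf1 hz1
      rw [hk z hz1] at h
      rw [hGeq z hzb, ← hkfb]
      exact h
    · have hz2 : z ∈ Icc b c := ⟨hzb.le, hz.2⟩
      rw [hGeq' z hzb]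
      exact convEnv_le hbc.le hf2 hz2
  -- monotonicity fact
  have hE2mono : ∀ y ∈ Icc b c, f b ≤ E2 y := by
    intro y hy
    rw [← hE2b]
    exact hmono hbmem2 hy hy.1
  -- G is convex on [a,c]
  have hGconv : ConvexOn ℝ (Icc a c) G := by
    refine LinearOrder.convexOn_of_lt (convex_Icc a c) ?_
    intro x hx y hy hxy p q hp hq hpq
    simp only [smul_eq_mul]
    have hid0 : y - (p * x + q * y) = p * (y - x) := by linear_combination (-y) * hpq
    have hzlty : p * x + q * y < y := by linarith [mul_pos hp (sub_pos.2 hxy)]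
    have hid1 : (p * x + q * y) - x = q * (y - x) := by linear_combination x * hpq
    have hxltz : x < p * x + q * y := by linarith [mul_pos hq (sub_pos.2 hxy)]
    rcases le_or_gt y b with hyb | hyb
    · -- everything is ≤ b
      rw [hGeq y hyb, hGeq x (hxy.le.trans hyb), hGeq _ (hzlty.le.trans hyb)]
      have : p * f b + q * f b = f b := by linear_combination (f b) * hpq
      linarith
    · have hym : y ∈ Icc b c := ⟨hyb.le, hy.2⟩
      rw [hGeq' y hyb]
      rcases le_or_gt b x with hbx | hxb
      · -- b ≤ x : use convexity of E2
        have hzb : b < p * x + q * y := by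
          have hid2 : (p * x + q * y) - b = p * (x - b) + q * (y - b) := by
            linear_combination b * hpq
          have := mul_nonneg hp.le (sub_nonneg.2 hbx)
          have := mul_pos hq (sub_pos.2 hyb)
          linarith
        have hxm : x ∈ Icc b c := ⟨hbx, hxy.le.trans hy.2⟩
        rw [hGeq' _ hzb, hGE2 x hxm]
        have := hE2conv.2 hxm hym hp.le hq.le hpq
        simpa using this
      · -- x < b
        rw [hGeq x hxb.le]
        rcases le_or_gt (p * x + q * y) b with hzb | hzb
        · rw [hGeq _ hzb]
          have h := hE2mono y hym
          have hid3 : p * f b + q * E2 y = f b + q * (E2 y - f b) := by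
            linear_combination (f b) * hpq
          linarith [mul_nonneg hq.le (sub_nonneg.2 h)]
        · rw [hGeq' _ hzb]
          set z := p * x + q * y with hz
          have hyb0 : (0:ℝ) < y - b := sub_pos.2 hyb
          set μ := (y - z) / (y - b) with hμdef
          set ν := (z - b) / (y - b) with hνdef
          have hμ0 : 0 ≤ μ := div_nonneg (by linarith) hyb0.le
          have hν0 : 0 ≤ ν := div_nonneg (by linarith) hyb0.le
          have hμν : μ + ν = 1 := by
            rw [hμdef, hνdef, ← add_div, div_eq_one_iff_eq hyb0.ne']
            ring
          have hzeq : μ • b + ν • y = z := by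
            simp only [smul_eq_mul, hμdef, hνdef]
            field_simp
            ring
          have hconv := hE2conv.2 hbmem2 hym hμ0 hν0 hμν
          rw [hzeq] at hconv
          simp only [smul_eq_mul] at hconv
          have hνq : ν ≤ q := by
            rw [hνdef, div_le_iff₀ hyb0, hz]
            have hid4 : q * (y - b) - ((p * x + q * y) - b) = p * (b - x) := by
              linear_combination (-b) * hpq
            linarith [mul_pos hp (sub_pos.2 hxb)]
          have hby : E2 b ≤ E2 y := hmono hbmem2 hym hyb.le
          have key : (q - ν) * (E2 y - E2 b) ≥ 0 :=
            mul_nonneg (by linarith) (by linarith)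
          rw [← hE2b]
          have hid5 : p * E2 b + q * E2 y - (μ * E2 b + ν * E2 y)
              = (q - ν) * (E2 y - E2 b) := by
            linear_combination (E2 b) * hpq - (E2 b) * hμν
          linarith [hconv, key]
  -- comparison: convEnv a c f ≥ G on [a,c]
  have hGmem : ∀ τ ∈ Icc a c, G τ ≤ convEnv a c f τ := by
    intro τ hτ
    exact le_convEnv hGconv hGle hτ
  -- comparison: convEnv a c f ≤ convEnv a b f on [a,b]
  have hEle1 : ∀ τ ∈ Icc a b, convEnv a c f τ ≤ convEnv a b f τ := by
    intro τ hτ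
    rw [convEnv_def, convEnv_def]
    refine csSup_le (envSet_nonempty hac hf τ) ?_
    rintro y ⟨g, hgc, hgle, rfl⟩
    exact le_csSup (envSet_bddAbove f hτ)
      ⟨g, hgc.subset hsub1 (convex_Icc a b), fun z hz => hgle z (hsub1 hz), rfl⟩
  have hEle2 : ∀ τ ∈ Icc b c, convEnv a c f τ ≤ E2 τ := by
    intro τ hτ
    rw [convEnv_def, hE2def, convEnv_def]
    refine csSup_le (envSet_nonempty hac hf τ) ?_
    rintro y ⟨g, hgc, hgle, rfl⟩
    exact le_csSup (envSet_bddAbove f hτ)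
      ⟨g, hgc.subset hsub2 (convex_Icc b c), fun z hz => hgle z (hsub2 hz), rfl⟩
  constructor
  · intro τ hτ
    have h1 := hEle1 τ hτ
    have h2 := hGmem τ (hsub1 hτ)
    rw [hGeq τ hτ.2, ← hkfb, ← hk τ hτ] at h2
    exact le_antisymm h1 h2
  · intro τ hτ
    have h1 := hEle2 τ hτ
    have h2 := hGmem τ (hsub2 hτ)
    rw [hGE2 τ hτ] at h2
    exact le_antisymm h1 h2
end

section
/- Let a < b be real numbers, let L > 0, and let f : ℝ → ℝ be continuously differentiable on [a,b] with derivative Lipschitz continuous on [a,b] with Lipschitz constant L. Then the convex envelope conv_{[a,b]} f is differentiable on [a,b] and its derivative is Lipschitz continuous on [a,b] with Lipschitz constant at most L. -/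
open Set

namespace ConvEnvAux

lemma mono_help {c d : ℝ} (g g' : ℝ → ℝ)
    (hg : ∀ y ∈ Icc c d, HasDerivWithinAt g (g' y) (Icc c d) y)
    (h0 : ∀ y ∈ Ioo c d, 0 ≤ g' y) : MonotoneOn g (Icc c d) := by
  refine monotoneOn_of_hasDerivWithinAt_nonneg (f' := g') (convex_Icc c d)
    (fun y hy => (hg y hy).continuousWithinAt) (fun y hy => ?_) (fun y hy => ?_)
  · rw [interior_Icc] at hy ⊢
    exact (hg y (Ioo_subset_Icc_self hy)).mono Ioo_subset_Icc_self
  · rw [interior_Icc] at hy; exact h0 y hy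

lemma anti_help {c d : ℝ} (g g' : ℝ → ℝ)
    (hg : ∀ y ∈ Icc c d, HasDerivWithinAt g (g' y) (Icc c d) y)
    (h0 : ∀ y ∈ Ioo c d, g' y ≤ 0) : AntitoneOn g (Icc c d) := by
  refine antitoneOn_of_hasDerivWithinAt_nonpos (f' := g') (convex_Icc c d)
    (fun y hy => (hg y hy).continuousWithinAt) (fun y hy => ?_) (fun y hy => ?_)
  · rw [interior_Icc] at hy ⊢
    exact (hg y (Ioo_subset_Icc_self hy)).mono Ioo_subset_Icc_self
  · rw [interior_Icc] at hy; exact h0 y hy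

lemma affine_convexOn (s : Set ℝ) (hs : Convex ℝ s) (c p q : ℝ) :
    ConvexOn ℝ s (fun z => c + p * (z - q)) := by
  refine ⟨hs, fun x _ y _ α β hα hβ hαβ => ?_⟩
  have : c + p * ((α * x + β * y) - q) = α * (c + p * (x - q)) + β * (c + p * (y - q)) := by
    linear_combination (c - p * q) * hαβ.symm
  simp only [smul_eq_mul]
  exact le_of_eq this

/-- Bundled data for the problem. -/
structure Dat where
  a : ℝ
  b : ℝ
  hab : a < b
  L : ℝ
  hL : 0 < L
  f : ℝ → ℝ
  f' : ℝ → ℝ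
  hf' : ∀ τ ∈ Set.Icc a b, HasDerivWithinAt f (f' τ) (Set.Icc a b) τ
  hlip : LipschitzOnWith (Real.toNNReal L) f' (Set.Icc a b)

namespace Dat

variable (D : Dat)

/-- `f` is continuous on `[a,b]`. -/
lemma fCont : ContinuousOn D.f (Icc D.a D.b) :=
  fun y hy => (D.hf' y hy).continuousWithinAt

/-- Lipschitz bound in convenient real form. -/
lemma lip_bound {x y : ℝ} (hx : x ∈ Icc D.a D.b) (hy : y ∈ Icc D.a D.b) :
    |D.f' y - D.f' x| ≤ D.L * |y - x| := by
  have h := D.hlip.dist_le_mul y hy x hx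
  rwa [Real.dist_eq, Real.dist_eq, Real.coe_toNNReal _ D.hL.le] at h

lemma quad_deriv (x : ℝ) (z : ℝ) :
    HasDerivAt (fun y : ℝ => D.f x + D.f' x * (y - x) + D.L / 2 * (y - x) ^ 2)
      (D.f' x + D.L * (z - x)) z := by
  have hp : HasDerivAt (fun y : ℝ => D.f x + D.f' x * (y - x) + D.L / 2 * (y - x) ^ 2)
      (0 + D.f' x * 1 + D.L / 2 * (2 * (z - x) ^ 1 * 1)) z := by
    apply HasDerivAt.add
    apply HasDerivAt.add
    · exact hasDerivAt_const _ _
    · exact ((hasDerivAt_id z).sub_const x).const_mul _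
    · exact (((hasDerivAt_id z).sub_const x).pow 2).const_mul _
  convert hp using 1; ring

/-- Taylor-type upper bound: `f y ≤ f x + f' x (y-x) + L/2 (y-x)^2`. -/
lemma taylor_up {x y : ℝ} (hx : x ∈ Icc D.a D.b) (hy : y ∈ Icc D.a D.b) :
    D.f y ≤ D.f x + D.f' x * (y - x) + D.L / 2 * (y - x) ^ 2 := by
  set F : ℝ → ℝ := fun y => D.f x + D.f' x * (y - x) + D.L / 2 * (y - x) ^ 2 - D.f y with hF
  have hF0 : F x = 0 := by simp [hF]
  have key : 0 ≤ F y := by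
    rcases le_total x y with hxy | hxy
    · have hsub : Icc x D.b ⊆ Icc D.a D.b := Icc_subset_Icc hx.1 le_rfl
      have hmono : MonotoneOn F (Icc x D.b) := by
        refine mono_help F (fun y => D.f' x + D.L * (y - x) - D.f' y) (fun z hz => ?_)
          (fun z hz => ?_)
        · exact ((D.quad_deriv x z).hasDerivWithinAt).sub ((D.hf' z (hsub hz)).mono hsub)
        · have hz' : z ∈ Icc D.a D.b := hsub (Ioo_subset_Icc_self hz)
          have h := D.lip_bound hx hz'
          rw [abs_of_nonneg (by linarith [hz.1] : (0:ℝ) ≤ z - x)] at h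
          have := (abs_le.mp h).2
          linarith
      have := hmono (left_mem_Icc.mpr hx.2) ⟨hxy, hy.2⟩ hxy
      rw [hF0] at this; exact this
    · have hsub : Icc D.a x ⊆ Icc D.a D.b := Icc_subset_Icc le_rfl hx.2
      have hanti : AntitoneOn F (Icc D.a x) := by
        refine anti_help F (fun y => D.f' x + D.L * (y - x) - D.f' y) (fun z hz => ?_)
          (fun z hz => ?_)
        · exact ((D.quad_deriv x z).hasDerivWithinAt).sub ((D.hf' z (hsub hz)).mono hsub)
        · have hz' : z ∈ Icc D.a D.b := hsub (Ioo_subset_Icc_self hz)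
          have h := D.lip_bound hx hz'
          rw [abs_of_nonpos (by linarith [hz.2] : z - x ≤ 0)] at h
          have := (abs_le.mp h).1
          linarith
      have := hanti ⟨hy.1, hxy⟩ (right_mem_Icc.mpr hx.1) hxy
      rw [hF0] at this; exact this
  simp only [hF] at key; linarith

/-- Taylor-type lower bound: `f x + f' x (y-x) - L/2 (y-x)^2 ≤ f y`. -/
lemma taylor_lo {x y : ℝ} (hx : x ∈ Icc D.a D.b) (hy : y ∈ Icc D.a D.b) :
    D.f x + D.f' x * (y - x) - D.L / 2 * (y - x) ^ 2 ≤ D.f y := by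
  set F : ℝ → ℝ := fun y => D.f y - (D.f x + D.f' x * (y - x) - D.L / 2 * (y - x) ^ 2) with hF
  have hF0 : F x = 0 := by simp [hF]
  have hd : ∀ z, HasDerivAt (fun y : ℝ => D.f x + D.f' x * (y - x) - D.L / 2 * (y - x) ^ 2)
      (D.f' x - D.L * (z - x)) z := by
    intro z
    have hp : HasDerivAt (fun y : ℝ => D.f x + D.f' x * (y - x) - D.L / 2 * (y - x) ^ 2)
        (0 + D.f' x * 1 - D.L / 2 * (2 * (z - x) ^ 1 * 1)) z := by
      apply HasDerivAt.sub
      apply HasDerivAt.add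
      · exact hasDerivAt_const _ _
      · exact ((hasDerivAt_id z).sub_const x).const_mul _
      · exact (((hasDerivAt_id z).sub_const x).pow 2).const_mul _
    convert hp using 1; ring
  have key : 0 ≤ F y := by
    rcases le_total x y with hxy | hxy
    · have hsub : Icc x D.b ⊆ Icc D.a D.b := Icc_subset_Icc hx.1 le_rfl
      have hmono : MonotoneOn F (Icc x D.b) := by
        refine mono_help F (fun y => D.f' y - (D.f' x - D.L * (y - x))) (fun z hz => ?_)
          (fun z hz => ?_)
        · exact ((D.hf' z (hsub hz)).mono hsub).sub ((hd z).hasDerivWithinAt)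
        · have hz' : z ∈ Icc D.a D.b := hsub (Ioo_subset_Icc_self hz)
          have h := D.lip_bound hx hz'
          rw [abs_of_nonneg (by linarith [hz.1] : (0:ℝ) ≤ z - x)] at h
          have := (abs_le.mp h).1
          linarith
      have := hmono (left_mem_Icc.mpr hx.2) ⟨hxy, hy.2⟩ hxy
      rw [hF0] at this; exact this
    · have hsub : Icc D.a x ⊆ Icc D.a D.b := Icc_subset_Icc le_rfl hx.2
      have hanti : AntitoneOn F (Icc D.a x) := by
        refine anti_help F (fun y => D.f' y - (D.f' x - D.L * (y - x))) (fun z hz => ?_)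
          (fun z hz => ?_)
        · exact ((D.hf' z (hsub hz)).mono hsub).sub ((hd z).hasDerivWithinAt)
        · have hz' : z ∈ Icc D.a D.b := hsub (Ioo_subset_Icc_self hz)
          have h := D.lip_bound hx hz'
          rw [abs_of_nonpos (by linarith [hz.2] : z - x ≤ 0)] at h
          have := (abs_le.mp h).2
          linarith
      have := hanti ⟨hy.1, hxy⟩ (right_mem_Icc.mpr hx.1) hxy
      rw [hF0] at this; exact this
  simp only [hF] at key; linarith

/-- The set of convex minorants. -/
def G : Set (ℝ → ℝ) :=
  {g | ConvexOn ℝ (Icc D.a D.b) g ∧ ∀ z ∈ Icc D.a D.b, g z ≤ D.f z}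

/-- The envelope. -/
noncomputable def E : ℝ → ℝ := convEnv D.a D.b D.f

lemma env_set_eq (τ : ℝ) :
    {y : ℝ | ∃ g : ℝ → ℝ, ConvexOn ℝ (Set.Icc D.a D.b) g ∧
      (∀ z ∈ Set.Icc D.a D.b, g z ≤ D.f z) ∧ g τ = y} = (fun g : ℝ → ℝ => g τ) '' D.G := by
  ext y
  simp only [mem_setOf_eq, mem_image, G]
  constructor
  · rintro ⟨g, h1, h2, h3⟩; exact ⟨g, ⟨h1, h2⟩, h3⟩
  · rintro ⟨g, ⟨h1, h2⟩, h3⟩; exact ⟨g, h1, h2, h3⟩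

/-- The left support line. -/
noncomputable def la : ℝ → ℝ := fun z => D.f D.a + (D.f' D.a - D.L / 2 * (D.b - D.a)) * (z - D.a)

/-- The right support line. -/
noncomputable def lb : ℝ → ℝ := fun z => D.f D.b + (D.f' D.b + D.L / 2 * (D.b - D.a)) * (z - D.b)

lemma la_mem : D.la ∈ D.G := by
  constructor
  · exact affine_convexOn _ (convex_Icc _ _) _ _ _
  · intro z hz
    have h := D.taylor_lo (left_mem_Icc.mpr D.hab.le) hz
    have h2 : (z - D.a) ^ 2 ≤ (D.b - D.a) * (z - D.a) := by nlinarith [hz.1, hz.2]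
    simp only [la]; nlinarith [D.hL]

lemma lb_mem : D.lb ∈ D.G := by
  constructor
  · exact affine_convexOn _ (convex_Icc _ _) _ _ _
  · intro z hz
    have h := D.taylor_lo (right_mem_Icc.mpr D.hab.le) hz
    have h2 : (z - D.b) ^ 2 ≤ -((D.b - D.a) * (z - D.b)) := by nlinarith [hz.1, hz.2]
    simp only [lb]; nlinarith [D.hL]

lemma bddAbove_env_set (τ : ℝ) (hτ : τ ∈ Icc D.a D.b) :
    BddAbove ((fun g : ℝ → ℝ => g τ) '' D.G) := by
  refine ⟨D.f τ, ?_⟩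
  rintro y ⟨g, hg, rfl⟩
  exact hg.2 τ hτ

lemma le_env {g : ℝ → ℝ} (hg : g ∈ D.G) {τ : ℝ} (hτ : τ ∈ Icc D.a D.b) :
    g τ ≤ D.E τ := by
  rw [E, convEnv, env_set_eq]
  exact le_csSup (D.bddAbove_env_set τ hτ) ⟨g, hg, rfl⟩

lemma env_le_f {τ : ℝ} (hτ : τ ∈ Icc D.a D.b) : D.E τ ≤ D.f τ := by
  rw [E, convEnv, env_set_eq]
  refine csSup_le ⟨D.la τ, D.la, D.la_mem, rfl⟩ ?_
  rintro y ⟨g, hg, rfl⟩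
  exact hg.2 τ hτ

lemma env_convex : ConvexOn ℝ (Icc D.a D.b) D.E := by
  refine ⟨convex_Icc _ _, fun x hx y hy α β hα hβ hαβ => ?_⟩
  have hmem : α • x + β • y ∈ Icc D.a D.b := (convex_Icc D.a D.b) hx hy hα hβ hαβ
  rw [E, convEnv, env_set_eq]
  refine csSup_le ⟨D.la (α • x + β • y), D.la, D.la_mem, rfl⟩ ?_
  rintro z ⟨g, hg, rfl⟩
  calc g (α • x + β • y) ≤ α • g x + β • g y := hg.1.2 hx hy hα hβ hαβ
    _ ≤ α • D.E x + β • D.E y := by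
        have h1 := D.le_env hg hx
        have h2 := D.le_env hg hy
        simp only [smul_eq_mul]
        nlinarith

lemma env_eq_a : D.E D.a = D.f D.a := by
  refine le_antisymm (D.env_le_f (left_mem_Icc.mpr D.hab.le)) ?_
  have := D.le_env D.la_mem (left_mem_Icc.mpr D.hab.le)
  simpa [la] using this

lemma env_eq_b : D.E D.b = D.f D.b := by
  refine le_antisymm (D.env_le_f (right_mem_Icc.mpr D.hab.le)) ?_
  have := D.le_env D.lb_mem (right_mem_Icc.mpr D.hab.le)
  simpa [lb] using this

/-- Chord upper bound from convexity. -/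
lemma env_chord {w : ℝ} (hw : w ∈ Icc D.a D.b) :
    D.E w ≤ ((D.b - w) * D.E D.a + (w - D.a) * D.E D.b) / (D.b - D.a) := by
  have hba : 0 < D.b - D.a := sub_pos.mpr D.hab
  set α := (D.b - w) / (D.b - D.a) with hαdef
  set β := (w - D.a) / (D.b - D.a) with hβdef
  have hα : 0 ≤ α := by apply div_nonneg; linarith [hw.2]; linarith
  have hβ : 0 ≤ β := by apply div_nonneg; linarith [hw.1]; linarith
  have hαβ : α + β = 1 := by rw [hαdef, hβdef]; field_simp; ring
  have hcomb : α • D.a + β • D.b = w := by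
    simp only [smul_eq_mul]
    rw [hαdef, hβdef]
    field_simp
    ring
  have h := D.env_convex.2 (left_mem_Icc.mpr D.hab.le) (right_mem_Icc.mpr D.hab.le) hα hβ hαβ
  rw [hcomb] at h
  calc D.E w ≤ α • D.E D.a + β • D.E D.b := h
    _ = ((D.b - w) * D.E D.a + (w - D.a) * D.E D.b) / (D.b - D.a) := by
        simp only [smul_eq_mul]
        rw [hαdef, hβdef]
        field_simp

lemma env_cont_within_a : ContinuousWithinAt D.E (Icc D.a D.b) D.a := by
  have hba : 0 < D.b - D.a := sub_pos.mpr D.hab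
  have hlow : ∀ w ∈ Icc D.a D.b, D.la w ≤ D.E w := fun w hw => D.le_env D.la_mem hw
  have hup : ∀ w ∈ Icc D.a D.b,
      D.E w ≤ ((D.b - w) * D.E D.a + (w - D.a) * D.E D.b) / (D.b - D.a) :=
    fun w hw => D.env_chord hw
  rw [ContinuousWithinAt]
  have hlim1 : Filter.Tendsto D.la (nhdsWithin D.a (Icc D.a D.b)) (nhds (D.E D.a)) := by
    have : Filter.Tendsto D.la (nhds D.a) (nhds (D.la D.a)) := by
      apply Continuous.tendsto
      unfold la; continuity
    have h2 : D.la D.a = D.E D.a := by rw [D.env_eq_a]; simp [la]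
    rw [h2] at this
    exact this.mono_left nhdsWithin_le_nhds
  have hlim2 : Filter.Tendsto (fun w => ((D.b - w) * D.E D.a + (w - D.a) * D.E D.b) / (D.b - D.a))
      (nhdsWithin D.a (Icc D.a D.b)) (nhds (D.E D.a)) := by
    have : Filter.Tendsto (fun w => ((D.b - w) * D.E D.a + (w - D.a) * D.E D.b) / (D.b - D.a))
        (nhds D.a) (nhds (((D.b - D.a) * D.E D.a + (D.a - D.a) * D.E D.b) / (D.b - D.a))) := by
      apply Continuous.tendsto
      continuity
    have h2 : ((D.b - D.a) * D.E D.a + (D.a - D.a) * D.E D.b) / (D.b - D.a) = D.E D.a := by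
      field_simp
      ring
    rw [h2] at this
    exact this.mono_left nhdsWithin_le_nhds
  exact tendsto_of_tendsto_of_tendsto_of_le_of_le' hlim1 hlim2
    (Filter.eventually_inf_principal.mpr (Filter.Eventually.of_forall hlow))
    (Filter.eventually_inf_principal.mpr (Filter.Eventually.of_forall hup))

lemma env_cont_within_b : ContinuousWithinAt D.E (Icc D.a D.b) D.b := by
  have hba : 0 < D.b - D.a := sub_pos.mpr D.hab
  have hlow : ∀ w ∈ Icc D.a D.b, D.lb w ≤ D.E w := fun w hw => D.le_env D.lb_mem hw
  have hup : ∀ w ∈ Icc D.a D.b,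
      D.E w ≤ ((D.b - w) * D.E D.a + (w - D.a) * D.E D.b) / (D.b - D.a) :=
    fun w hw => D.env_chord hw
  rw [ContinuousWithinAt]
  have hlim1 : Filter.Tendsto D.lb (nhdsWithin D.b (Icc D.a D.b)) (nhds (D.E D.b)) := by
    have : Filter.Tendsto D.lb (nhds D.b) (nhds (D.lb D.b)) := by
      apply Continuous.tendsto
      unfold lb; continuity
    have h2 : D.lb D.b = D.E D.b := by rw [D.env_eq_b]; simp [lb]
    rw [h2] at this
    exact this.mono_left nhdsWithin_le_nhds
  have hlim2 : Filter.Tendsto (fun w => ((D.b - w) * D.E D.a + (w - D.a) * D.E D.b) / (D.b - D.a))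
      (nhdsWithin D.b (Icc D.a D.b)) (nhds (D.E D.b)) := by
    have : Filter.Tendsto (fun w => ((D.b - w) * D.E D.a + (w - D.a) * D.E D.b) / (D.b - D.a))
        (nhds D.b) (nhds (((D.b - D.b) * D.E D.a + (D.b - D.a) * D.E D.b) / (D.b - D.a))) := by
      apply Continuous.tendsto
      continuity
    have h2 : ((D.b - D.b) * D.E D.a + (D.b - D.a) * D.E D.b) / (D.b - D.a) = D.E D.b := by
      field_simp
      ring
    rw [h2] at this
    exact this.mono_left nhdsWithin_le_nhds
  exact tendsto_of_tendsto_of_tendsto_of_le_of_le' hlim1 hlim2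
    (Filter.eventually_inf_principal.mpr (Filter.Eventually.of_forall hlow))
    (Filter.eventually_inf_principal.mpr (Filter.Eventually.of_forall hup))

lemma env_cont : ContinuousOn D.E (Icc D.a D.b) := by
  intro x hx
  rcases eq_or_lt_of_le hx.1 with h1 | h1
  · rw [← h1]; exact D.env_cont_within_a
  rcases eq_or_lt_of_le hx.2 with h2 | h2
  · rw [h2]; exact D.env_cont_within_b
  · have hIoo : ContinuousOn D.E (Ioo D.a D.b) :=
      (D.env_convex.subset Ioo_subset_Icc_self (convex_Ioo _ _)).continuousOn isOpen_Ioo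
    have : ContinuousAt D.E x :=
      (hIoo x ⟨h1, h2⟩).continuousAt (isOpen_Ioo.mem_nhds ⟨h1, h2⟩)
    exact this.continuousWithinAt

/-- Right slopes of the envelope at `τ`. -/
noncomputable def Rslopes (τ : ℝ) : Set ℝ :=
  (fun w => (D.E w - D.E τ) / (w - τ)) '' (Ioc τ D.b)

noncomputable def pR (τ : ℝ) : ℝ := sInf (D.Rslopes τ)

lemma Rslopes_nonempty {τ : ℝ} (hτ : τ < D.b) : (D.Rslopes τ).Nonempty :=
  ⟨_, ⟨D.b, ⟨hτ, le_rfl⟩, rfl⟩⟩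

lemma Rslopes_bddBelow {τ : ℝ} (hτ : τ ∈ Icc D.a D.b) : BddBelow (D.Rslopes τ) := by
  rcases eq_or_lt_of_le hτ.1 with h1 | h1
  · -- τ = a : use the line la
    subst h1
    refine ⟨D.f' D.a - D.L / 2 * (D.b - D.a), ?_⟩
    rintro y ⟨w, hw, rfl⟩
    have hwI : w ∈ Icc D.a D.b := ⟨hw.1.le, hw.2⟩
    have h2 : D.la w ≤ D.E w := D.le_env D.la_mem hwI
    have h3 : D.E D.a = D.f D.a := D.env_eq_a
    have hwa : 0 < w - D.a := by linarith [hw.1]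
    rw [le_div_iff₀ hwa]
    simp only [la] at h2
    linarith [h2, h3]
  · -- τ > a : use the slope from a
    refine ⟨(D.E D.a - D.E τ) / (D.a - τ), ?_⟩
    rintro y ⟨w, hw, rfl⟩
    exact D.env_convex.secant_mono hτ (left_mem_Icc.mpr D.hab.le) ⟨hτ.1.trans hw.1.le, hw.2⟩
      (by linarith) (by linarith [hw.1]) (by linarith [hw.1])

lemma pR_subgrad {τ : ℝ} (hτ : τ ∈ Icc D.a D.b) (hτb : τ < D.b) :
    ∀ w ∈ Icc D.a D.b, D.E τ + D.pR τ * (w - τ) ≤ D.E w := by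
  intro w hw
  rcases lt_trichotomy w τ with h | h | h
  · -- w < τ : slope(w) ≤ every right slope hence ≤ sInf
    have key : (D.E w - D.E τ) / (w - τ) ≤ D.pR τ := by
      refine le_csInf (D.Rslopes_nonempty hτb) ?_
      rintro y ⟨v, hv, rfl⟩
      exact D.env_convex.secant_mono hτ ⟨hw.1, hw.2⟩ ⟨hτ.1.trans hv.1.le, hv.2⟩
        (by linarith) (by linarith [hv.1]) (by linarith [hv.1])
    have hwτ : w - τ < 0 := by linarith
    rw [div_le_iff_of_neg hwτ] at key
    linarith
  · simp [h]
  · have key : D.pR τ ≤ (D.E w - D.E τ) / (w - τ) :=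
      csInf_le (D.Rslopes_bddBelow hτ) ⟨w, ⟨h, hw.2⟩, rfl⟩
    have hwτ : 0 < w - τ := by linarith
    rw [le_div_iff₀ hwτ] at key
    linarith

lemma pR_approx {τ : ℝ} (hτ : τ ∈ Icc D.a D.b) (hτb : τ < D.b) {ε : ℝ} (hε : 0 < ε) :
    ∃ w ∈ Ioc τ D.b, D.E w < D.E τ + (D.pR τ + ε) * (w - τ) := by
  have h : sInf (D.Rslopes τ) < D.pR τ + ε := by rw [pR]; linarith
  obtain ⟨y, ⟨w, hw, rfl⟩, hy⟩ := exists_lt_of_csInf_lt (D.Rslopes_nonempty hτb) h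
  refine ⟨w, hw, ?_⟩
  have hwτ : 0 < w - τ := by linarith [hw.1]
  rw [div_lt_iff₀ hwτ] at hy
  linarith

/-- At an interior contact point, any subgradient of `E` equals `f'`. -/
lemma contact_deriv {t p : ℝ} (ht : t ∈ Ioo D.a D.b) (hc : D.E t = D.f t)
    (hsub : ∀ w ∈ Icc D.a D.b, D.E t + p * (w - t) ≤ D.E w) : p = D.f' t := by
  have hIcc : Icc D.a D.b ∈ nhds t := Icc_mem_nhds ht.1 ht.2
  have hmin : IsLocalMin (fun w => D.f w - p * w) t := by
    have : ∀ w ∈ Icc D.a D.b, D.f t - p * t ≤ D.f w - p * w := by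
      intro w hw
      have h1 := hsub w hw
      have h2 := D.env_le_f hw
      rw [hc] at h1
      linarith
    exact Filter.eventually_iff_exists_mem.mpr ⟨Icc D.a D.b, hIcc, fun w hw => this w hw⟩
  have hd : HasDerivAt (fun w => D.f w - p * w) (D.f' t - p) t := by
    have h1 : HasDerivAt D.f (D.f' t) t :=
      (D.hf' t (Ioo_subset_Icc_self ht)).hasDerivAt hIcc
    have h2 := h1.sub ((hasDerivAt_id t).const_mul p)
    rw [mul_one] at h2
    exact h2
  have := hmin.deriv_eq_zero
  rw [hd.deriv] at this
  linarith

/-- Reflected data. -/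
noncomputable def reflect : Dat where
  a := D.a
  b := D.b
  hab := D.hab
  L := D.L
  hL := D.hL
  f := fun x => D.f (D.a + D.b - x)
  f' := fun x => -D.f' (D.a + D.b - x)
  hf' := by
    intro τ hτ
    have hmem : D.a + D.b - τ ∈ Icc D.a D.b := ⟨by linarith [hτ.2], by linarith [hτ.1]⟩
    have hu : HasDerivWithinAt (fun x : ℝ => D.a + D.b - x) (-1) (Icc D.a D.b) τ := by
      simpa using ((hasDerivAt_id τ).const_sub (D.a + D.b)).hasDerivWithinAt
    have hmaps : MapsTo (fun x : ℝ => D.a + D.b - x) (Icc D.a D.b) (Icc D.a D.b) := by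
      intro x hx
      simp only [mem_Icc] at *
      constructor <;> linarith [hx.1, hx.2]
    have := HasDerivWithinAt.comp τ (D.hf' _ hmem) hu hmaps
    rw [mul_neg_one] at this
    exact this
  hlip := by
    rw [lipschitzOnWith_iff_dist_le_mul]
    intro x hx y hy
    have hmx : D.a + D.b - x ∈ Icc D.a D.b := ⟨by linarith [hx.2], by linarith [hx.1]⟩
    have hmy : D.a + D.b - y ∈ Icc D.a D.b := ⟨by linarith [hy.2], by linarith [hy.1]⟩
    calc dist (-D.f' (D.a + D.b - x)) (-D.f' (D.a + D.b - y))
        = dist (D.f' (D.a + D.b - x)) (D.f' (D.a + D.b - y)) := dist_neg_neg _ _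
      _ ≤ Real.toNNReal D.L * dist (D.a + D.b - x) (D.a + D.b - y) :=
          lipschitzOnWith_iff_dist_le_mul.mp D.hlip _ hmx _ hmy
      _ = Real.toNNReal D.L * dist x y := by
          rw [Real.dist_eq, Real.dist_eq]
          congr 1
          rw [show D.a + D.b - x - (D.a + D.b - y) = -(x - y) by ring, abs_neg]

lemma convexOn_comp_reflect {g : ℝ → ℝ} (hg : ConvexOn ℝ (Icc D.a D.b) g) :
    ConvexOn ℝ (Icc D.a D.b) (fun x => g (D.a + D.b - x)) := by
  refine ⟨convex_Icc _ _, fun x hx y hy α β hα hβ hαβ => ?_⟩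
  have hmx : D.a + D.b - x ∈ Icc D.a D.b := ⟨by linarith [hx.2], by linarith [hx.1]⟩
  have hmy : D.a + D.b - y ∈ Icc D.a D.b := ⟨by linarith [hy.2], by linarith [hy.1]⟩
  have harg : D.a + D.b - (α • x + β • y) = α • (D.a + D.b - x) + β • (D.a + D.b - y) := by
    simp only [smul_eq_mul]
    linear_combination (D.a + D.b) * hαβ.symm
  dsimp only
  rw [harg]
  exact hg.2 hmx hmy hα hβ hαβ

lemma env_reflect {τ : ℝ} (hτ : τ ∈ Icc D.a D.b) :
    D.reflect.E (D.a + D.b - τ) = D.E τ := by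
  have hset : {y : ℝ | ∃ g : ℝ → ℝ, ConvexOn ℝ (Set.Icc D.reflect.a D.reflect.b) g ∧
      (∀ z ∈ Set.Icc D.reflect.a D.reflect.b, g z ≤ D.reflect.f z) ∧ g (D.a + D.b - τ) = y}
      = {y : ℝ | ∃ g : ℝ → ℝ, ConvexOn ℝ (Set.Icc D.a D.b) g ∧
      (∀ z ∈ Set.Icc D.a D.b, g z ≤ D.f z) ∧ g τ = y} := by
    ext y
    simp only [mem_setOf_eq, reflect]
    constructor
    · rintro ⟨g, h1, h2, h3⟩
      refine ⟨fun x => g (D.a + D.b - x), D.convexOn_comp_reflect h1, fun z hz => ?_, ?_⟩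
      · have hmz : D.a + D.b - z ∈ Icc D.a D.b := ⟨by linarith [hz.2], by linarith [hz.1]⟩
        have := h2 _ hmz
        simpa [show D.a + D.b - (D.a + D.b - z) = z by ring] using this
      · exact h3
    · rintro ⟨g, h1, h2, h3⟩
      refine ⟨fun x => g (D.a + D.b - x), D.convexOn_comp_reflect h1, fun z hz => ?_, ?_⟩
      · exact h2 _ ⟨by linarith [hz.2], by linarith [hz.1]⟩
      · dsimp only; rw [show D.a + D.b - (D.a + D.b - τ) = τ by ring]; exact h3
  rw [E, E, convEnv, convEnv]
  exact congrArg sSup hset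

lemma reflect_a : D.reflect.a = D.a := rfl
lemma reflect_b : D.reflect.b = D.b := rfl
lemma reflect_L : D.reflect.L = D.L := rfl

/-- Continuity of `f` at a point gives a uniform lower bound nearby. -/
lemma f_near {β c : ℝ} (hβ : β ∈ Icc D.a D.b) (hc : 0 < c) :
    ∃ η > 0, ∀ w ∈ Icc D.a D.b, |w - β| < η → D.f β - c < D.f w := by
  have hcw : ContinuousWithinAt D.f (Icc D.a D.b) β := D.fCont β hβ
  have hev : {w | D.f β - c < D.f w} ∈ nhdsWithin β (Icc D.a D.b) :=
    hcw (Ioi_mem_nhds (by linarith))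
  rw [Metric.mem_nhdsWithin_iff] at hev
  obtain ⟨η, hη, hsub⟩ := hev
  refine ⟨η, hη, fun w hw hwβ => ?_⟩
  exact hsub ⟨by rwa [Metric.mem_ball, Real.dist_eq], hw⟩

/-- If the subgradient line at a contact point `a` stays strictly below `E` to the right,
then `f' a ≤ p`. -/
lemma contact_a_slope {p z : ℝ} (hz : z ∈ Ioc D.a D.b)
    (hp1 : ∀ w ∈ Icc D.a D.b, D.E D.a + p * (w - D.a) ≤ D.E w)
    (hp2 : ∀ ε > (0:ℝ), ∃ w ∈ Ioc D.a D.b, D.E w < D.E D.a + (p + ε) * (w - D.a))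
    (hpos : ∀ w ∈ Ioc D.a D.b, D.E D.a + p * (w - D.a) < D.E w) :
    D.f' D.a ≤ p := by
  by_contra hlt
  push_neg at hlt
  set ℓ : ℝ → ℝ := fun w => D.E D.a + p * (w - D.a) with hℓ
  have hEa : D.E D.a = D.f D.a := D.env_eq_a
  set η : ℝ := min ((D.f' D.a - p) / D.L) (D.b - D.a) with hη
  have hηpos : 0 < η := by
    apply lt_min
    · apply div_pos (by linarith) D.hL
    · linarith [D.hab]
  -- minimum of f - ℓ on [a+η, b]
  have hsubset : Icc (D.a + η) D.b ⊆ Icc D.a D.b := by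
    apply Icc_subset_Icc <;> linarith [hηpos]
  have hcont : ContinuousOn (fun w => D.f w - ℓ w) (Icc (D.a + η) D.b) := by
    apply ContinuousOn.sub (D.fCont.mono hsubset)
    exact (Continuous.continuousOn (by unfold ℓ; continuity))
  have hne : (Icc (D.a + η) D.b).Nonempty := by
    rw [nonempty_Icc]
    have := min_le_right ((D.f' D.a - p) / D.L) (D.b - D.a)
    rw [← hη] at this; linarith
  obtain ⟨w₀, hw₀, hw₀min⟩ := isCompact_Icc.exists_isMinOn hne hcont
  set δ : ℝ := D.f w₀ - ℓ w₀ with hδ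
  have hδpos : 0 < δ := by
    have h1 : ℓ w₀ < D.E w₀ := hpos w₀ ⟨by linarith [hw₀.1, hηpos], hw₀.2⟩
    have h2 : D.E w₀ ≤ D.f w₀ := D.env_le_f (hsubset hw₀)
    rw [hδ]; linarith
  set ε : ℝ := min ((D.f' D.a - p) / 2) (δ / (D.b - D.a)) with hε
  have hεpos : 0 < ε := by
    apply lt_min
    · linarith
    · apply div_pos hδpos; linarith [D.hab]
  -- the tilted line is a minorant
  have hmem : (fun w => D.E D.a + (p + ε) * (w - D.a)) ∈ D.G := by
    constructor
    · exact affine_convexOn _ (convex_Icc _ _) _ _ _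
    · intro w hw
      rcases le_or_gt w (D.a + η) with hque | hque
      · -- Taylor lower bound region
        have ht := D.taylor_lo (left_mem_Icc.mpr D.hab.le) hw
        have hwa : 0 ≤ w - D.a := by linarith [hw.1]
        have hηb : η ≤ (D.f' D.a - p) / D.L := min_le_left _ _
        have hLη : D.L * (w - D.a) ≤ D.f' D.a - p := by
          have h1 : D.L * (w - D.a) ≤ D.L * η := by nlinarith [D.hL]
          have h2 : D.L * η ≤ D.f' D.a - p := (le_div_iff₀' D.hL).mp hηb
          linarith
        have hεle : ε ≤ (D.f' D.a - p) / 2 := min_le_left _ _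
        have k1 : D.L * (w - D.a) / 2 ≤ D.f' D.a - p - ε := by linarith
        have k2 : (D.L * (w - D.a) / 2) * (w - D.a) ≤ (D.f' D.a - p - ε) * (w - D.a) :=
          mul_le_mul_of_nonneg_right k1 hwa
        have k3 : (D.L * (w - D.a) / 2) * (w - D.a) = D.L / 2 * (w - D.a) ^ 2 := by ring
        show D.E D.a + (p + ε) * (w - D.a) ≤ D.f w
        rw [hEa]
        linarith [ht, k2, k3]
      · -- far region: use δ
        have hw0 : w ∈ Icc (D.a + η) D.b := ⟨hque.le, hw.2⟩
        have hmin := hw₀min hw0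
        simp only [hδ] at hmin
        have hfw : ℓ w + δ ≤ D.f w := by
          have : D.f w₀ - ℓ w₀ ≤ D.f w - ℓ w := hmin
          rw [hδ]; linarith
        have hεw : ε * (w - D.a) ≤ δ := by
          have h1 : ε ≤ δ / (D.b - D.a) := min_le_right _ _
          have h2 : 0 ≤ w - D.a := by linarith [hw.1]
          have h3 : w - D.a ≤ D.b - D.a := by linarith [hw.2]
          calc ε * (w - D.a) ≤ (δ / (D.b - D.a)) * (w - D.a) := by nlinarith
            _ ≤ (δ / (D.b - D.a)) * (D.b - D.a) := by
                apply mul_le_mul_of_nonneg_left h3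
                exact div_nonneg hδpos.le (by linarith [D.hab])
            _ = δ := div_mul_cancel₀ _ (by linarith [D.hab] : D.b - D.a ≠ 0)
        have hℓw : ℓ w = D.E D.a + p * (w - D.a) := rfl
        show D.E D.a + (p + ε) * (w - D.a) ≤ D.f w
        linarith
  -- contradiction with hp2
  obtain ⟨w, hw, hwlt⟩ := hp2 ε hεpos
  have h := D.le_env hmem ⟨hw.1.le, hw.2⟩
  have h2 : D.E D.a + (p + ε) * (w - D.a) ≤ D.E w := h
  linarith

set_option maxHeartbeats 2000000 in
lemma noncontact_absurd {β p : ℝ} (hβ : β ∈ Icc D.a D.b) (hβb : β < D.b)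
    (hsub : ∀ w ∈ Icc D.a D.b, D.E β + p * (w - β) ≤ D.E w)
    (hpos : ∀ w ∈ Ioc β D.b, D.E β + p * (w - β) < D.E w)
    (hEf : D.E β < D.f β) : False := by
  have hq := D.pR_subgrad hβ hβb
  set q : ℝ := D.pR β with hqdef
  have hqsub : ∀ w ∈ Icc D.a D.b, D.E β + q * (w - β) ≤ D.E w := hq
  have hpq : p ≤ q := by
    rw [hqdef]
    refine le_csInf ⟨(D.E D.b - D.E β) / (D.b - β), D.b, ⟨hβb, le_rfl⟩, rfl⟩ ?_
    rintro y ⟨w, hw, rfl⟩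
    have h1 := hsub w ⟨hβ.1.trans hw.1.le, hw.2⟩
    have h2 : 0 < w - β := by linarith [hw.1]
    rw [le_div_iff₀ h2]
    linarith
  clear_value q
  obtain ⟨c, hc⟩ : ∃ c, c = (D.f β - D.E β) / 2 := ⟨_, rfl⟩
  have hcpos : 0 < c := by rw [hc]; linarith
  obtain ⟨η₁, hη₁, hfnear⟩ := D.f_near hβ hcpos
  have hfβc : D.f β - c = D.E β + c := by rw [hc]; ring
  rcases eq_or_lt_of_le hpq with hqp | hqp
  · -- q = p : tilt the line up slightly
    obtain ⟨η, hηd⟩ : ∃ η, η = min (η₁ / 2) (min (c / (|p| + 1)) (D.b - β)) := ⟨_, rfl⟩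
    have hηa : η ≤ η₁ / 2 := hηd ▸ min_le_left _ _
    have hηc : η ≤ c / (|p| + 1) := hηd ▸ (min_le_right _ _).trans (min_le_left _ _)
    have hηb' : η ≤ D.b - β := hηd ▸ (min_le_right _ _).trans (min_le_right _ _)
    have hηpos : 0 < η := by
      rw [hηd]
      refine lt_min (by linarith) (lt_min (by positivity) (by linarith))
    have hηb : β + η ≤ D.b := by linarith
    obtain ⟨ℓ, hℓ⟩ : ∃ ℓ : ℝ → ℝ, ℓ = fun w => D.E β + p * (w - β) := ⟨_, rfl⟩
    have hsubset : Icc (β + η) D.b ⊆ Icc D.a D.b := by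
      apply Icc_subset_Icc _ le_rfl; linarith [hβ.1]
    have hcont : ContinuousOn (fun w => D.f w - ℓ w) (Icc (β + η) D.b) := by
      apply ContinuousOn.sub (D.fCont.mono hsubset)
      exact Continuous.continuousOn (by rw [hℓ]; continuity)
    obtain ⟨w₀, hw₀, hw₀min⟩ := isCompact_Icc.exists_isMinOn (nonempty_Icc.mpr hηb) hcont
    obtain ⟨δ, hδ⟩ : ∃ δ, δ = D.f w₀ - ℓ w₀ := ⟨_, rfl⟩
    have hδpos : 0 < δ := by
      have h1 : ℓ w₀ < D.E w₀ := by
        rw [hℓ]; exact hpos w₀ ⟨by linarith [hw₀.1], hw₀.2⟩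
      have h2 : D.E w₀ ≤ D.f w₀ := D.env_le_f (hsubset hw₀)
      rw [hδ]; linarith
    obtain ⟨ε, hεd⟩ : ∃ ε, ε = min 1 (δ / (D.b - D.a)) := ⟨_, rfl⟩
    have hε1 : ε ≤ 1 := hεd ▸ min_le_left _ _
    have hε2 : ε ≤ δ / (D.b - D.a) := hεd ▸ min_le_right _ _
    have hεpos : 0 < ε := by
      rw [hεd]; exact lt_min one_pos (div_pos hδpos (by linarith [D.hab]))
    have hmem : (fun w => D.E β + (p + ε) * (w - β)) ∈ D.G := by
      constructor
      · exact affine_convexOn _ (convex_Icc _ _) _ _ _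
      · intro w hw
        show D.E β + (p + ε) * (w - β) ≤ D.f w
        rcases le_or_gt w β with hwβ | hwβ
        · have h1 := hsub w hw
          have h2 := D.env_le_f hw
          have h3 : ε * (w - β) ≤ 0 := mul_nonpos_of_nonneg_of_nonpos hεpos.le (by linarith)
          linarith
        rcases lt_or_ge w (β + η) with hwη | hwη
        · -- near region
          have hnear := hfnear w hw
            (by rw [abs_of_pos (by linarith : (0:ℝ) < w - β)]; linarith)
          rw [hfβc] at hnear
          have hb1 : (p + ε) * (w - β) ≤ (|p| + 1) * η := by
            have e1 : p + ε ≤ |p| + 1 := by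
              have := le_abs_self p
              linarith
            have e2 : (0:ℝ) ≤ w - β := by linarith
            have e3 : w - β ≤ η := by linarith
            have e4 : (0:ℝ) ≤ |p| + 1 := by positivity
            calc (p + ε) * (w - β) ≤ (|p| + 1) * (w - β) := mul_le_mul_of_nonneg_right e1 e2
              _ ≤ (|p| + 1) * η := mul_le_mul_of_nonneg_left e3 e4
          have hb2 : (|p| + 1) * η ≤ c := by
            have h6 : (0:ℝ) < |p| + 1 := by positivity
            have h5 := (le_div_iff₀ h6).mp hηc
            linarith [h5]
          linarith
        · -- far region
          have hmin := hw₀min ⟨hwη, hw.2⟩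
          have hfw : ℓ w + δ ≤ D.f w := by
            have h7 : D.f w₀ - ℓ w₀ ≤ D.f w - ℓ w := hmin
            rw [hδ]; linarith
          have hεw : ε * (w - β) ≤ δ := by
            have h2 : (0:ℝ) ≤ w - β := by linarith
            have h3 : w - β ≤ D.b - D.a := by linarith [hw.2, hβ.1]
            calc ε * (w - β) ≤ (δ / (D.b - D.a)) * (w - β) := mul_le_mul_of_nonneg_right hε2 h2
              _ ≤ (δ / (D.b - D.a)) * (D.b - D.a) :=
                  mul_le_mul_of_nonneg_left h3 (div_nonneg hδpos.le (by linarith [D.hab]))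
              _ = δ := div_mul_cancel₀ _ (by linarith [D.hab] : D.b - D.a ≠ 0)
          have hℓw : ℓ w = D.E β + p * (w - β) := by rw [hℓ]
          linarith
    obtain ⟨w, hw, hwlt⟩ := D.pR_approx hβ hβb hεpos
    have h := D.le_env hmem ⟨hβ.1.trans hw.1.le, hw.2⟩
    have h2 : D.E β + (p + ε) * (w - β) ≤ D.E w := h
    rw [← hqdef, ← hqp] at hwlt
    linarith
  · -- p < q : corner, raise an intermediate line
    obtain ⟨r, hr⟩ : ∃ r, r = (p + q) / 2 := ⟨_, rfl⟩
    have hrp : 0 < r - p := by rw [hr]; linarith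
    have hqr : 0 < q - r := by rw [hr]; linarith
    obtain ⟨η, hηd⟩ : ∃ η, η = min (η₁ / 2) (min (c / (2 * (|r| + 1))) (D.b - β)) := ⟨_, rfl⟩
    have hη₁le : η ≤ η₁ / 2 := hηd ▸ min_le_left _ _
    have hη2 : η ≤ c / (2 * (|r| + 1)) := hηd ▸ (min_le_right _ _).trans (min_le_left _ _)
    have hη3 : η ≤ D.b - β := hηd ▸ (min_le_right _ _).trans (min_le_right _ _)
    have hηpos : 0 < η := by
      rw [hηd]
      exact lt_min (by linarith) (lt_min (by positivity) (by linarith))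
    obtain ⟨μ, hμd⟩ : ∃ μ, μ = min ((r - p) * η) (min ((q - r) * η) (c / 2)) := ⟨_, rfl⟩
    have hμ1 : μ ≤ (r - p) * η := hμd ▸ min_le_left _ _
    have hμ2 : μ ≤ (q - r) * η := hμd ▸ (min_le_right _ _).trans (min_le_left _ _)
    have hμ3 : μ ≤ c / 2 := hμd ▸ (min_le_right _ _).trans (min_le_right _ _)
    have hμpos : 0 < μ := by
      rw [hμd]
      refine lt_min (by positivity) (lt_min (by positivity) (by positivity))
    have hmem : (fun w => D.E β + μ + r * (w - β)) ∈ D.G := by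
      constructor
      · have : (fun w => D.E β + μ + r * (w - β)) = fun w => (D.E β + μ) + r * (w - β) := by
          funext w; ring
        rw [this]
        exact affine_convexOn _ (convex_Icc _ _) _ _ _
      · intro w hw
        show D.E β + μ + r * (w - β) ≤ D.f w
        rcases le_or_gt w (β - η) with hwl | hwl
        · -- left region
          have h1 := hsub w hw
          have h2 := D.env_le_f hw
          have h4 : (r - p) * (w - β) ≤ (r - p) * (-η) :=
            mul_le_mul_of_nonneg_left (by linarith) hrp.le
          have h5 : (r - p) * (-η) = -((r - p) * η) := by ring
          linarith
        rcases le_or_gt w (β + η) with hwr | hwr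
        · -- middle region
          have hnear := hfnear w hw (abs_lt.mpr ⟨by linarith, by linarith⟩)
          rw [hfβc] at hnear
          have h8 : |w - β| ≤ η := abs_le.mpr ⟨by linarith, by linarith⟩
          have h9 : r * (w - β) ≤ |r| * η := by
            calc r * (w - β) ≤ |r * (w - β)| := le_abs_self _
              _ = |r| * |w - β| := abs_mul _ _
              _ ≤ |r| * η := mul_le_mul_of_nonneg_left h8 (abs_nonneg r)
          have h10 : η * (2 * (|r| + 1)) ≤ c := by
            have h6 : (0:ℝ) < 2 * (|r| + 1) := by positivity
            exact (le_div_iff₀ h6).mp hη2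
          have h12 : 0 ≤ |r| := abs_nonneg r
          have h13 : |r| * η ≤ c / 2 := by nlinarith [hηpos]
          linarith
        · -- right region
          have hslope : D.E β + q * (w - β) ≤ D.E w := hqsub w hw
          have h2 := D.env_le_f hw
          have h4 : (q - r) * η ≤ (q - r) * (w - β) :=
            mul_le_mul_of_nonneg_left (by linarith) hqr.le
          linarith
    have h := D.le_env hmem hβ
    have h2 : D.E β + μ + r * (β - β) ≤ D.E β := h
    simp only [sub_self, mul_zero, add_zero] at h2
    linarith

/-- Chord bound for the convex envelope. -/
lemma env_le_chord {x y w : ℝ} (hx : x ∈ Icc D.a D.b) (hw : w ∈ Icc D.a D.b)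
    (hxy : x ≤ y) (hyw : y ≤ w) (hxw : x < w) :
    D.E y ≤ ((w - y) * D.E x + (y - x) * D.E w) / (w - x) := by
  have hwx : 0 < w - x := by linarith
  have hα : 0 ≤ (w - y) / (w - x) := div_nonneg (by linarith) hwx.le
  have hβ : 0 ≤ (y - x) / (w - x) := div_nonneg (by linarith) hwx.le
  have hαβ : (w - y) / (w - x) + (y - x) / (w - x) = 1 := by field_simp; ring
  have hcomb : ((w - y) / (w - x)) • x + ((y - x) / (w - x)) • w = y := by
    simp only [smul_eq_mul]; field_simp; ring
  have h := D.env_convex.2 hx hw hα hβ hαβ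
  rw [hcomb] at h
  calc D.E y ≤ ((w - y) / (w - x)) • D.E x + ((y - x) / (w - x)) • D.E w := h
    _ = ((w - y) * D.E x + (y - x) * D.E w) / (w - x) := by
        simp only [smul_eq_mul]
        field_simp

set_option maxHeartbeats 2000000 in
/-- The main upper estimate to the right of `τ`. -/
lemma key_upper {τ z p : ℝ} (hτ : τ ∈ Icc D.a D.b) (hz : z ∈ Icc D.a D.b) (hτz : τ ≤ z)
    (hp1 : ∀ w ∈ Icc D.a D.b, D.E τ + p * (w - τ) ≤ D.E w)
    (hp2 : ∀ ε > (0:ℝ), ∃ w ∈ Ioc τ D.b, D.E w < D.E τ + (p + ε) * (w - τ)) :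
    D.E z ≤ D.E τ + p * (z - τ) + D.L / 2 * (z - τ) ^ 2 := by
  by_cases hEz' : D.E z ≤ D.E τ + p * (z - τ)
  · nlinarith [sq_nonneg (z - τ), D.hL.le]
  push_neg at hEz'
  have hτltz : τ < z := by
    rcases eq_or_lt_of_le hτz with h | h
    · exfalso; rw [← h] at hEz'; simp at hEz'
    · exact h
  -- the contact set of the subgradient line
  obtain ⟨Z, hZdef⟩ : ∃ Z : Set ℝ, Z = {w | w ∈ Icc τ z ∧ D.E w = D.E τ + p * (w - τ)} :=
    ⟨_, rfl⟩
  have hτZ : τ ∈ Z := by rw [hZdef]; exact ⟨left_mem_Icc.mpr hτz, by ring⟩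
  have hIccsub : Icc τ z ⊆ Icc D.a D.b := Icc_subset_Icc hτ.1 hz.2
  have hZclosed : IsClosed Z := by
    have : Z = Icc τ z ∩ (fun w => D.E w - (D.E τ + p * (w - τ))) ⁻¹' {0} := by
      rw [hZdef]; ext w
      simp only [mem_setOf_eq, mem_inter_iff, mem_preimage, mem_singleton_iff, sub_eq_zero]
    rw [this]
    refine ContinuousOn.preimage_isClosed_of_isClosed ?_ isClosed_Icc isClosed_singleton
    exact (D.env_cont.mono hIccsub).sub
      (Continuous.continuousOn (by continuity))
  have hZcomp : IsCompact Z :=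
    isCompact_Icc.of_isClosed_subset hZclosed (by rw [hZdef]; exact fun w hw => hw.1)
  obtain ⟨β, hβZ, hβub⟩ := hZcomp.exists_isGreatest ⟨τ, hτZ⟩
  rw [hZdef] at hβZ
  obtain ⟨hβIcc, hβE⟩ := hβZ
  have hβab : β ∈ Icc D.a D.b := hIccsub hβIcc
  have hβz : β < z := by
    rcases eq_or_lt_of_le hβIcc.2 with h | h
    · exfalso; rw [h] at hβE; linarith
    · exact h
  have hβb : β < D.b := lt_of_lt_of_le hβz hz.2
  have hτβ : τ ≤ β := hβIcc.1
  -- the subgradient line, rebased at β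
  have hsubβ : ∀ w ∈ Icc D.a D.b, D.E β + p * (w - β) ≤ D.E w := by
    intro w hw
    have h1 := hp1 w hw
    have h2 : D.E β + p * (w - β) = D.E τ + p * (w - τ) := by rw [hβE]; ring
    linarith
  -- strict above the line beyond β
  have hpos : ∀ w ∈ Ioc β D.b, D.E β + p * (w - β) < D.E w := by
    intro w hw
    have hwab : w ∈ Icc D.a D.b := ⟨hβab.1.trans hw.1.le, hw.2⟩
    rcases lt_or_ge (D.E β + p * (w - β)) (D.E w) with h | h
    · exact h
    exfalso
    have heq : D.E w = D.E τ + p * (w - τ) := by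
      have h1 := hp1 w hwab
      have h2 : D.E β + p * (w - β) = D.E τ + p * (w - τ) := by rw [hβE]; ring
      linarith
    rcases le_or_gt w z with hwz | hwz
    · -- w would be in Z beyond β
      have : w ∈ Z := by rw [hZdef]; exact ⟨⟨hτβ.trans hw.1.le, hwz⟩, heq⟩
      have := hβub this
      linarith [hw.1]
    · -- z is between β and w, both on the line: contradiction with hEz'
      have hch := D.env_le_chord hβab hwab hβz.le hwz.le (hβz.trans hwz)
      have hval : ((w - z) * D.E β + (z - β) * D.E w) / (w - β) = D.E τ + p * (z - τ) := by
        rw [hβE, heq]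
        have hwβ : w - β ≠ 0 := by intro hc; have : w = β := by linarith [sub_eq_zero.mp hc]
                                   linarith [hβz, hwz]
        field_simp
        ring
      rw [hval] at hch
      linarith
  by_cases hcon : D.E β = D.f β
  · -- contact case
    rcases eq_or_lt_of_le hβab.1 with hβa | hβa
    · -- β = a, hence τ = a
      have hτa : τ = D.a := le_antisymm (by linarith [hβIcc.1]) hτ.1
      have hfa : D.f' D.a ≤ p := by
        refine D.contact_a_slope (z := z) ⟨?_, hz.2⟩ ?_ ?_ ?_
        · rw [← hβa] at hβz; linarith
        · intro w hw; rw [← hτa]; exact hp1 w hw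
        · intro ε hε
          obtain ⟨w, hw, hlt⟩ := hp2 ε hε
          exact ⟨w, by rw [hτa] at hw; exact hw, by rw [← hτa]; exact hlt⟩
        · intro w hw
          have := hpos w (by rw [← hβa]; exact hw)
          rw [← hβa] at this
          exact this
      have hEa : D.E D.a = D.f D.a := D.env_eq_a
      have ht := D.taylor_up (left_mem_Icc.mpr D.hab.le) hz
      have hEfz : D.E z ≤ D.f z := D.env_le_f hz
      have hza : 0 ≤ z - D.a := by linarith [hz.1]
      have hmul : D.f' D.a * (z - D.a) ≤ p * (z - D.a) :=
        mul_le_mul_of_nonneg_right hfa hza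
      rw [hτa, hEa]
      have hzz : z - τ = z - D.a := by rw [hτa]
      rw [hτa] at hzz
      linarith [ht, hmul]
    · -- interior contact
      have hfp : p = D.f' β := D.contact_deriv ⟨hβa, hβb⟩ hcon hsubβ
      have ht := D.taylor_up hβab hz
      have hEfz : D.E z ≤ D.f z := D.env_le_f hz
      have hsq : (z - β) ^ 2 ≤ (z - τ) ^ 2 := by nlinarith [hτβ, hβz.le]
      have hline : D.f β + p * (z - β) = D.E τ + p * (z - τ) := by
        rw [← hcon, hβE]; ring
      rw [← hfp] at ht
      rw [← hcon] at ht
      nlinarith [D.hL.le, ht, hsq, hEfz, hline]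
  · -- no contact: impossible
    exact absurd (D.noncontact_absurd hβab hβb hsubβ hpos
      (lt_of_le_of_ne (D.env_le_f hβab) hcon)) not_false

/-- Transfer of `key_upper` to the left side via reflection. -/
lemma key_upper_left {τ z : ℝ} (hτ : τ ∈ Icc D.a D.b) (hτa : D.a < τ)
    (hz : z ∈ Icc D.a D.b) (hzτ : z ≤ τ) :
    D.E z ≤ D.E τ + (-(D.reflect.pR (D.a + D.b - τ))) * (z - τ)
      + D.L / 2 * (z - τ) ^ 2 := by
  set R := D.reflect with hR
  have hRa : R.a = D.a := D.reflect_a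
  have hRb : R.b = D.b := D.reflect_b
  have hRL : R.L = D.L := D.reflect_L
  have hτ' : D.a + D.b - τ ∈ Icc R.a R.b := by
    rw [hRa, hRb]; exact ⟨by linarith [hτ.2], by linarith [hτ.1]⟩
  have hz' : D.a + D.b - z ∈ Icc R.a R.b := by
    rw [hRa, hRb]; exact ⟨by linarith [hz.2], by linarith [hz.1]⟩
  have hτb' : D.a + D.b - τ < R.b := by rw [hRb]; linarith
  have h := R.key_upper hτ' hz' (by linarith)
    (R.pR_subgrad hτ' hτb') (fun ε hε => R.pR_approx hτ' hτb' hε)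
  rw [D.env_reflect hτ, D.env_reflect hz] at h
  calc D.E z ≤ D.E τ + R.pR (D.a + D.b - τ) * ((D.a + D.b - z) - (D.a + D.b - τ))
        + R.L / 2 * ((D.a + D.b - z) - (D.a + D.b - τ)) ^ 2 := h
    _ = D.E τ + (-(R.pR (D.a + D.b - τ))) * (z - τ) + D.L / 2 * (z - τ) ^ 2 := by
        rw [hRL]; ring

/-- The two-sided sandwich property. -/
lemma sandwich : ∀ τ ∈ Icc D.a D.b, ∃ p : ℝ, ∀ z ∈ Icc D.a D.b,
    D.E τ + p * (z - τ) ≤ D.E z ∧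
    D.E z ≤ D.E τ + p * (z - τ) + D.L / 2 * (z - τ) ^ 2 := by
  intro τ hτ
  rcases eq_or_lt_of_le hτ.2 with hτb | hτb
  · -- τ = b : use reflection only
    refine ⟨-(D.reflect.pR (D.a + D.b - τ)), fun z hz => ?_⟩
    constructor
    · set R := D.reflect with hR
      have hRa : R.a = D.a := D.reflect_a
      have hRb : R.b = D.b := D.reflect_b
      have hτ' : D.a + D.b - τ ∈ Icc R.a R.b := by
        rw [hRa, hRb]; exact ⟨by linarith [hτ.2], by linarith [hτ.1]⟩
      have hz' : D.a + D.b - z ∈ Icc R.a R.b := by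
        rw [hRa, hRb]; exact ⟨by linarith [hz.2], by linarith [hz.1]⟩
      have hτb' : D.a + D.b - τ < R.b := by rw [hRb, hτb]; linarith [D.hab]
      have h := R.pR_subgrad hτ' hτb' _ hz'
      rw [D.env_reflect hτ, D.env_reflect hz] at h
      have : R.E = D.reflect.E := rfl
      calc D.E τ + -R.pR (D.a + D.b - τ) * (z - τ)
          = D.E τ + R.pR (D.a + D.b - τ) * ((D.a + D.b - z) - (D.a + D.b - τ)) := by ring
        _ ≤ D.E z := h
    · exact D.key_upper_left hτ (by rw [hτb]; exact D.hab) hz (by rw [hτb]; exact hz.2)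
  · rcases eq_or_lt_of_le hτ.1 with hτa | hτa
    · -- τ = a : right side only
      refine ⟨D.pR τ, fun z hz => ?_⟩
      exact ⟨D.pR_subgrad hτ hτb z hz,
        D.key_upper hτ hz (by rw [← hτa]; exact hz.1)
          (D.pR_subgrad hτ hτb) (fun ε hε => D.pR_approx hτ hτb hε)⟩
    · -- interior : need pR τ = pl τ
      set pl : ℝ := -(D.reflect.pR (D.a + D.b - τ)) with hpl
      have hplle : D.pR τ ≤ pl := by
        by_contra hcon
        push_neg at hcon
        set ε : ℝ := D.pR τ - pl with hε
        have hεpos : 0 < ε := by rw [hε]; linarith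
        set t : ℝ := min (τ - D.a) (min (D.b - τ) (ε / (4 * D.L))) with ht
        have ht1 : t ≤ τ - D.a := min_le_left _ _
        have ht2 : t ≤ D.b - τ := (min_le_right _ _).trans (min_le_left _ _)
        have ht3 : t ≤ ε / (4 * D.L) := (min_le_right _ _).trans (min_le_right _ _)
        have htpos : 0 < t := by
          rw [ht]
          exact lt_min (by linarith) (lt_min (by linarith) (div_pos hεpos (by linarith [D.hL])))
        have hzI : τ - t ∈ Icc D.a D.b := ⟨by linarith, by linarith [hτ.2]⟩
        have hwI : τ + t ∈ Icc D.a D.b := ⟨by linarith [hτ.1], by linarith⟩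
        have hzb : τ - t < D.b := by linarith
        -- key_upper based at τ - t evaluated at τ + t
        have h1 := D.key_upper hzI hwI (by linarith)
          (D.pR_subgrad hzI hzb) (fun ε' hε' => D.pR_approx hzI hzb hε')
        -- subgradient at τ - t evaluated at τ
        have h2 := D.pR_subgrad hzI hzb τ hτ
        -- pR (τ - t) ≤ slope(τ-t, τ) ≤ pl
        have h3 : D.pR (τ - t) ≤ pl := by
          have hA : D.pR (τ - t) ≤ (D.E τ - D.E (τ - t)) / (τ - (τ - t)) :=
            csInf_le (D.Rslopes_bddBelow hzI) ⟨τ, ⟨by linarith, hτ.2⟩, rfl⟩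
          have hB : (D.E (τ - t) - D.E τ) / ((D.a + D.b - (τ - t)) - (D.a + D.b - τ))
              ≥ D.reflect.pR (D.a + D.b - τ) := by
            set R := D.reflect with hR
            have hRa : R.a = D.a := D.reflect_a
            have hRb : R.b = D.b := D.reflect_b
            have hτ' : D.a + D.b - τ ∈ Icc R.a R.b := by
              rw [hRa, hRb]; exact ⟨by linarith [hτ.2], by linarith [hτ.1]⟩
            have hmem : D.a + D.b - (τ - t) ∈ Ioc (D.a + D.b - τ) R.b := by
              rw [hRb]; exact ⟨by linarith, by linarith⟩
            have hv : R.pR (D.a + D.b - τ) ≤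
                (R.E (D.a + D.b - (τ - t)) - R.E (D.a + D.b - τ))
                  / ((D.a + D.b - (τ - t)) - (D.a + D.b - τ)) :=
              csInf_le (R.Rslopes_bddBelow hτ') ⟨D.a + D.b - (τ - t), hmem, rfl⟩
            rw [D.env_reflect hτ, D.env_reflect hzI] at hv
            exact hv
          rw [hpl]
          have hden : (D.a + D.b - (τ - t)) - (D.a + D.b - τ) = t := by ring
          have hden2 : τ - (τ - t) = t := by ring
          rw [hden] at hB
          rw [hden2] at hA
          have : (D.E (τ - t) - D.E τ) / t = -((D.E τ - D.E (τ - t)) / t) := by ring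
          rw [this] at hB
          linarith
        -- pR τ ≤ slope(τ, τ + t)
        have h4 : D.pR τ ≤ (D.E (τ + t) - D.E τ) / ((τ + t) - τ) :=
          csInf_le (D.Rslopes_bddBelow hτ) ⟨τ + t, ⟨by linarith, by linarith⟩, rfl⟩
        have hden3 : (τ + t) - τ = t := by ring
        rw [hden3] at h4
        rw [le_div_iff₀ htpos] at h4
        -- combine
        have hexp : (τ + t) - (τ - t) = 2 * t := by ring
        rw [hexp] at h1
        have h2t : 2 * D.L * t ≤ ε / 2 := by
          have : 4 * D.L * t ≤ ε := by
            have h6 : (0:ℝ) < 4 * D.L := by linarith [D.hL]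
            have := (le_div_iff₀ h6).mp ht3
            linarith
          linarith
        -- E(τ+t) ≤ E(τ-t) + pR(τ-t)·2t + 2Lt², E(τ-t) ≤ E τ - pR(τ-t)·t
        -- ⇒ E(τ+t) - E τ ≤ pR(τ-t)·t + 2Lt² ⇒ pR τ · t ≤ pl·t + 2Lt²
        have h5 : D.pR τ * t ≤ pl * t + 2 * D.L * t ^ 2 := by nlinarith [h1, h2, h3, htpos]
        have h7 : D.pR τ ≤ pl + 2 * D.L * t := by nlinarith [h5, htpos]
        have h8 : 2 * D.L * t ≤ ε / 2 := h2t
        rw [hε] at h8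
        linarith [h7, h8, hcon]
      have hlepl : pl ≤ D.pR τ := by
        -- pl is a subgradient, so below all right slopes
        refine le_csInf ⟨(D.E D.b - D.E τ) / (D.b - τ), D.b, ⟨hτb, le_rfl⟩, rfl⟩ ?_
        rintro y ⟨w, hw, rfl⟩
        have hsub : D.E τ + pl * (w - τ) ≤ D.E w := by
          set R := D.reflect with hR
          have hRa : R.a = D.a := D.reflect_a
          have hRb : R.b = D.b := D.reflect_b
          have hτ' : D.a + D.b - τ ∈ Icc R.a R.b := by
            rw [hRa, hRb]; exact ⟨by linarith [hτ.2], by linarith [hτ.1]⟩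
          have hw' : D.a + D.b - w ∈ Icc R.a R.b := by
            rw [hRa, hRb]; exact ⟨by linarith [hw.2], by linarith [hτ.1, hw.1]⟩
          have hτb' : D.a + D.b - τ < R.b := by rw [hRb]; linarith
          have h := R.pR_subgrad hτ' hτb' _ hw'
          rw [D.env_reflect hτ, D.env_reflect ⟨hτ.1.trans hw.1.le, hw.2⟩] at h
          calc D.E τ + pl * (w - τ)
              = D.E τ + R.pR (D.a + D.b - τ) * ((D.a + D.b - w) - (D.a + D.b - τ)) := by
                rw [hpl]; ring
            _ ≤ D.E w := h
        have hwτ : 0 < w - τ := by linarith [hw.1]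
        rw [le_div_iff₀ hwτ]
        linarith
      have hpleq : pl = D.pR τ := le_antisymm hlepl hplle
      refine ⟨D.pR τ, fun z hz => ?_⟩
      refine ⟨D.pR_subgrad hτ hτb z hz, ?_⟩
      rcases le_total τ z with hτz | hzτ
      · exact D.key_upper hτ hz hτz (D.pR_subgrad hτ hτb)
          (fun ε hε => D.pR_approx hτ hτb hε)
      · have := D.key_upper_left hτ hτa hz hzτ
        rw [← hpl, hpleq] at this
        exact this

/-- Choice of the derivative function. -/
noncomputable def E' : ℝ → ℝ := fun τ =>
  if h : τ ∈ Icc D.a D.b then Classical.choose (D.sandwich τ h) else 0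

lemma E'_spec {τ : ℝ} (hτ : τ ∈ Icc D.a D.b) : ∀ z ∈ Icc D.a D.b,
    D.E τ + D.E' τ * (z - τ) ≤ D.E z ∧
    D.E z ≤ D.E τ + D.E' τ * (z - τ) + D.L / 2 * (z - τ) ^ 2 := by
  intro z hz
  rw [E', dif_pos hτ]
  exact Classical.choose_spec (D.sandwich τ hτ) z hz

lemma hasDeriv {τ : ℝ} (hτ : τ ∈ Icc D.a D.b) :
    HasDerivWithinAt D.E (D.E' τ) (Icc D.a D.b) τ := by
  rw [hasDerivWithinAt_iff_isLittleO]
  rw [Asymptotics.isLittleO_iff]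
  intro c hc
  have h1 : ∀ᶠ z in nhdsWithin τ (Icc D.a D.b), z ∈ Icc D.a D.b := self_mem_nhdsWithin
  have h2 : ∀ᶠ z in nhdsWithin τ (Icc D.a D.b), |z - τ| < 2 * c / D.L := by
    refine Filter.Eventually.filter_mono nhdsWithin_le_nhds ?_
    exact eventually_abs_sub_lt τ (div_pos (by linarith) D.hL)
  filter_upwards [h1, h2] with z hz hzc
  obtain ⟨hlo, hup⟩ := D.E'_spec hτ z hz
  have habs : |D.E z - D.E τ - (z - τ) * D.E' τ| ≤ D.L / 2 * (z - τ) ^ 2 := by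
    rw [abs_le]
    constructor <;> nlinarith [hlo, hup]
  have hsq : D.L / 2 * (z - τ) ^ 2 ≤ c * |z - τ| := by
    have e1 : (z - τ) ^ 2 = |z - τ| * |z - τ| := by rw [← sq_abs]; ring
    rw [e1]
    have h3 : D.L / 2 * |z - τ| ≤ c := by
      have h5 : D.L / 2 * |z - τ| ≤ D.L / 2 * (2 * c / D.L) :=
        mul_le_mul_of_nonneg_left hzc.le (by linarith [D.hL])
      have h4a : 2 * c / D.L * D.L = 2 * c := div_mul_cancel₀ _ (ne_of_gt D.hL)
      have h4 : D.L / 2 * (2 * c / D.L) = c := by linear_combination h4a / 2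
      linarith
    calc D.L / 2 * (|z - τ| * |z - τ|) = (D.L / 2 * |z - τ|) * |z - τ| := by ring
      _ ≤ c * |z - τ| := mul_le_mul_of_nonneg_right h3 (abs_nonneg _)
  calc ‖D.E z - D.E τ - (z - τ) * D.E' τ‖ = |D.E z - D.E τ - (z - τ) * D.E' τ| := rfl
    _ ≤ D.L / 2 * (z - τ) ^ 2 := habs
    _ ≤ c * |z - τ| := hsq
    _ = c * ‖z - τ‖ := rfl

lemma lipschitz : LipschitzOnWith (Real.toNNReal D.L) D.E' (Icc D.a D.b) := by
  rw [lipschitzOnWith_iff_dist_le_mul]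
  intro x hx y hy
  rcases eq_or_ne x y with h | hne
  · simp [h, Real.coe_toNNReal _ D.hL.le]
  obtain ⟨h1, h3⟩ := D.E'_spec hx y hy
  obtain ⟨h2, h4⟩ := D.E'_spec hy x hx
  -- (E' y - E' x)(y - x) ∈ [0, L (y-x)^2]
  have hM1 : (D.E' x - D.E' y) * (y - x) ≤ 0 := by nlinarith [h1, h2]
  have hM2 : (D.E' y - D.E' x) * (y - x) ≤ D.L * (y - x) ^ 2 := by nlinarith [h3, h4]
  have habs : |(D.E' y - D.E' x) * (y - x)| ≤ D.L * (y - x) ^ 2 := by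
    rw [abs_le]
    constructor
    · nlinarith [hM1, sq_nonneg (y - x), D.hL.le]
    · exact hM2
  rw [abs_mul] at habs
  have hyx : 0 < |y - x| := by
    rw [abs_pos]; intro hc; exact hne (by linarith [sub_eq_zero.mp hc])
  have hsq2 : (y - x) ^ 2 = |y - x| * |y - x| := by
    rw [← sq_abs]; ring
  rw [hsq2] at habs
  have : |D.E' y - D.E' x| ≤ D.L * |y - x| := by
    have := le_of_mul_le_mul_right (by linarith [habs] : |D.E' y - D.E' x| * |y - x| ≤ (D.L * |y - x|) * |y - x|) hyx
    exact this
  rw [Real.dist_eq, Real.dist_eq, Real.coe_toNNReal _ D.hL.le, abs_sub_comm]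
  calc |D.E' y - D.E' x| ≤ D.L * |y - x| := this
    _ = D.L * |x - y| := by rw [abs_sub_comm]

end Dat
end ConvEnvAux

/-- Griewank–Rabier; used in Step 5 of the proof of Lemma 3.2. If `f`
is `C^{1,1}_L` on `[a,b]` (differentiable with `L`-Lipschitz derivative), then its convex
envelope on `[a,b]` is also differentiable with `L`-Lipschitz derivative. -/
theorem convEnv_C11 (a b : ℝ) (hab : a < b) (L : ℝ) (hL : 0 < L)
    (f f' : ℝ → ℝ)
    (hf' : ∀ τ ∈ Set.Icc a b, HasDerivWithinAt f (f' τ) (Set.Icc a b) τ)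
    (hlip : LipschitzOnWith (Real.toNNReal L) f' (Set.Icc a b)) :
    ∃ E' : ℝ → ℝ,
      (∀ τ ∈ Set.Icc a b, HasDerivWithinAt (convEnv a b f) (E' τ) (Set.Icc a b) τ) ∧
      LipschitzOnWith (Real.toNNReal L) E' (Set.Icc a b) := by
  let D : ConvEnvAux.Dat := ⟨a, b, hab, L, hL, f, f', hf', hlip⟩
  exact ⟨D.E', fun τ hτ => D.hasDeriv hτ, D.lipschitz⟩
end

section
/- Let a < b be real numbers and let f : ℝ → ℝ be continuously differentiable on [a,b] with Lipschitz continuous derivative on [a,b], so that the convex envelope E := conv_{[a,b]} f is differentiable on [a,b]. Suppose the set {τ ∈ [a,b] : E′(τ) ≥ 0} is nonempty and let τ₀ be its minimum. Then the monotone convex envelope of f on [a,b] satisfies: monconv_{[a,b]} f(τ) = E(τ) for every τ ∈ [τ₀, b], and monconv_{[a,b]} f(τ) = E(τ₀) for every τ ∈ [a, τ₀]. -/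
/-- The monotone convex envelope of `f` on the interval `[a,b]`:
`monconv_{[a,b]} f (τ) = sup { g τ : g convex and nondecreasing on [a,b], g ≤ f }`. -/
noncomputable def monConvEnv (a b : ℝ) (f : ℝ → ℝ) (τ : ℝ) : ℝ :=
  sSup {y : ℝ | ∃ g : ℝ → ℝ, ConvexOn ℝ (Set.Icc a b) g ∧
    MonotoneOn g (Set.Icc a b) ∧ (∀ z ∈ Set.Icc a b, g z ≤ f z) ∧ g τ = y}

/-- formula (e:mon) in Step 5 of the proof of Lemma 3.2. Let `f` be
`C^{1,1}` on `[a,b]`, let `E = conv_{[a,b]} f` with derivative `E'` on `[a,b]`, and let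
`τ₀` be the minimum of the nonempty set `{τ ∈ [a,b] : E′(τ) ≥ 0}`. Then the monotone
convex envelope of `f` equals `E` on `[τ₀, b]` and is constantly `E(τ₀)` on `[a, τ₀]`. -/
theorem monConvEnv_eq_convEnv (a b : ℝ) (hab : a < b) (L : ℝ) (hL : 0 < L)
    (f f' : ℝ → ℝ)
    (hf' : ∀ τ ∈ Set.Icc a b, HasDerivWithinAt f (f' τ) (Set.Icc a b) τ)
    (hlip : LipschitzOnWith (Real.toNNReal L) f' (Set.Icc a b))
    (E' : ℝ → ℝ)
    (hE' : ∀ τ ∈ Set.Icc a b, HasDerivWithinAt (convEnv a b f) (E' τ) (Set.Icc a b) τ)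
    (τ₀ : ℝ)
    (hτ₀ : IsLeast {τ ∈ Set.Icc a b | 0 ≤ E' τ} τ₀) :
    (∀ τ ∈ Set.Icc τ₀ b, monConvEnv a b f τ = convEnv a b f τ) ∧
    (∀ τ ∈ Set.Icc a τ₀, monConvEnv a b f τ = convEnv a b f τ₀) := by
  set S := Set.Icc a b with hS
  set E := convEnv a b f with hE
  obtain ⟨⟨hτ₀S, hE'τ₀⟩, hτ₀least⟩ := hτ₀
  -- continuity of f on S
  have hfc : ContinuousOn f S := fun τ hτ => (hf' τ hτ).continuousWithinAt
  -- a uniform constant lower bound c for f on S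
  set c : ℝ := sInf (f '' S) with hc
  have hSne : S.Nonempty := Set.nonempty_Icc.2 hab.le
  have himg : IsCompact (f '' S) := (isCompact_Icc).image_of_continuousOn hfc
  have hcle : ∀ z ∈ S, c ≤ f z := fun z hz =>
    csInf_le himg.bddBelow ⟨z, hz, rfl⟩
  -- the defining sets
  set A : ℝ → Set ℝ := fun τ => {y : ℝ | ∃ g : ℝ → ℝ, ConvexOn ℝ S g ∧
    (∀ z ∈ S, g z ≤ f z) ∧ g τ = y} with hA
  set B : ℝ → Set ℝ := fun τ => {y : ℝ | ∃ g : ℝ → ℝ, ConvexOn ℝ S g ∧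
    MonotoneOn g S ∧ (∀ z ∈ S, g z ≤ f z) ∧ g τ = y} with hB
  have hEA : ∀ τ, E τ = sSup (A τ) := fun τ => rfl
  have hMB : ∀ τ, monConvEnv a b f τ = sSup (B τ) := fun τ => rfl
  have hconstA : ∀ τ, c ∈ A τ := by
    intro τ
    exact ⟨fun _ => c, convexOn_const c (convex_Icc a b), fun z hz => hcle z hz, rfl⟩
  have hconstB : ∀ τ, c ∈ B τ := by
    intro τ
    exact ⟨fun _ => c, convexOn_const c (convex_Icc a b),
      fun x _ y _ _ => le_rfl, fun z hz => hcle z hz, rfl⟩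
  have hbddA : ∀ τ ∈ S, BddAbove (A τ) := by
    intro τ hτ
    refine ⟨f τ, ?_⟩
    rintro y ⟨g, _, hgf, rfl⟩
    exact hgf τ hτ
  have hbddB : ∀ τ ∈ S, BddAbove (B τ) := by
    intro τ hτ
    refine ⟨f τ, ?_⟩
    rintro y ⟨g, _, _, hgf, rfl⟩
    exact hgf τ hτ
  -- every convex minorant is ≤ E
  have hle_E : ∀ g : ℝ → ℝ, ConvexOn ℝ S g → (∀ z ∈ S, g z ≤ f z) →
      ∀ τ ∈ S, g τ ≤ E τ := by
    intro g hg hgf τ hτ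
    exact le_csSup (hbddA τ hτ) ⟨g, hg, hgf, rfl⟩
  have hE_le_f : ∀ τ ∈ S, E τ ≤ f τ := by
    intro τ hτ
    refine csSup_le ⟨c, hconstA τ⟩ ?_
    rintro y ⟨g, _, hgf, rfl⟩
    exact hgf τ hτ
  -- E is convex on S
  have hEconv : ConvexOn ℝ S E := by
    refine ⟨convex_Icc a b, ?_⟩
    intro x hx y hy p q hp hq hpq
    have hxyS : p • x + q • y ∈ S := (convex_Icc a b) hx hy hp hq hpq
    refine csSup_le ⟨c, hconstA _⟩ ?_
    rintro w ⟨g, hg, hgf, rfl⟩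
    calc g (p • x + q • y) ≤ p • g x + q • g y := hg.2 hx hy hp hq hpq
      _ ≤ p • E x + q • E y := by
          have h1 := hle_E g hg hgf x hx
          have h2 := hle_E g hg hgf y hy
          simp only [smul_eq_mul]
          nlinarith
  have hEcont : ContinuousOn E S := fun τ hτ => (hE' τ hτ).continuousWithinAt
  -- E' τ < 0 for τ ∈ [a, τ₀)
  have hE'neg : ∀ τ ∈ S, τ < τ₀ → E' τ < 0 := by
    intro τ hτ hlt
    by_contra h
    push_neg at h
    exact absurd (hτ₀least ⟨hτ, h⟩) (not_le.2 hlt)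
  -- E is antitone on [a, τ₀]
  have hIccsub : Set.Icc a τ₀ ⊆ S := Set.Icc_subset_Icc le_rfl hτ₀S.2
  have hEanti : AntitoneOn E (Set.Icc a τ₀) := by
    refine antitoneOn_of_hasDerivWithinAt_nonpos (convex_Icc a τ₀)
      (hEcont.mono hIccsub) (f' := E') ?_ ?_
    · intro x hx
      rw [interior_Icc] at hx
      refine (hE' x (hIccsub (Set.mem_Icc_of_Ioo hx))).mono ?_
      rw [interior_Icc]
      exact (Set.Ioo_subset_Icc_self).trans hIccsub
    · intro x hx
      rw [interior_Icc] at hx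
      exact (hE'neg x (hIccsub (Set.mem_Icc_of_Ioo hx)) hx.2).le
  -- E is monotone on [τ₀, b]
  have hIccsub' : Set.Icc τ₀ b ⊆ S := Set.Icc_subset_Icc hτ₀S.1 le_rfl
  have hslope : ∀ y ∈ S, τ₀ < y → 0 ≤ slope E τ₀ y := by
    intro y hy hlt
    exact le_trans hE'τ₀ (hEconv.le_slope_of_hasDerivWithinAt hτ₀S hy hlt (hE' τ₀ hτ₀S))
  have hEmono : MonotoneOn E (Set.Icc τ₀ b) := by
    intro x hx y hy hxy
    rcases eq_or_lt_of_le hxy with rfl | hxy'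
    · exact le_rfl
    have hyS : y ∈ S := hIccsub' hy
    have hxS : x ∈ S := hIccsub' hx
    have hτ₀y : τ₀ < y := lt_of_le_of_lt hx.1 hxy'
    have h0 : 0 ≤ slope E τ₀ y := hslope y hyS hτ₀y
    rcases eq_or_lt_of_le hx.1 with heq | hτ₀x
    · -- x = τ₀
      rw [heq] at h0
      rw [slope_def_field, div_nonneg_iff] at h0
      have hpos : 0 < y - x := sub_pos.2 hxy'
      rcases h0 with ⟨h2, _⟩ | ⟨_, h2⟩
      · linarith
      · linarith
    · -- τ₀ < x < y : use monotonicity of slopes from y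
      have hmono := hEconv.slope_mono hyS
      have hτ₀mem : τ₀ ∈ S \ {y} := ⟨hτ₀S, fun h => absurd h hτ₀y.ne⟩
      have hxmem : x ∈ S \ {y} := ⟨hxS, fun h => absurd h hxy'.ne⟩
      have h1 : slope E y τ₀ ≤ slope E y x := hmono hτ₀mem hxmem hx.1
      have h0' : 0 ≤ slope E y τ₀ := by rw [slope_comm]; exact h0
      have h2 : 0 ≤ slope E y x := le_trans h0' h1
      rw [slope_comm, slope_def_field] at h2
      have hpos : 0 < y - x := sub_pos.2 hxy'
      rw [div_nonneg_iff] at h2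
      rcases h2 with ⟨h2, _⟩ | ⟨_, h2⟩
      · linarith
      · linarith
  -- the candidate function h τ = E (max τ τ₀)
  set h : ℝ → ℝ := fun τ => E (max τ τ₀) with hh
  have hmaxS : ∀ τ ∈ S, max τ τ₀ ∈ Set.Icc τ₀ b := by
    intro τ hτ
    exact ⟨le_max_right _ _, max_le hτ.2 hτ₀S.2⟩
  have hhconv : ConvexOn ℝ S h := by
    refine ⟨convex_Icc a b, ?_⟩
    intro x hx y hy p q hp hq hpq
    have hx' := hmaxS x hx
    have hy' := hmaxS y hy
    have hcomb : p • max x τ₀ + q • max y τ₀ ∈ Set.Icc τ₀ b :=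
      (convex_Icc τ₀ b) hx' hy' hp hq hpq
    have hmaxle : max (p • x + q • y) τ₀ ≤ p • max x τ₀ + q • max y τ₀ := by
      refine max_le ?_ ?_
      · have := add_le_add (mul_le_mul_of_nonneg_left (le_max_left x τ₀) hp)
          (mul_le_mul_of_nonneg_left (le_max_left y τ₀) hq)
        simpa [smul_eq_mul] using this
      · have := add_le_add (mul_le_mul_of_nonneg_left (le_max_right x τ₀) hp)
          (mul_le_mul_of_nonneg_left (le_max_right y τ₀) hq)
        simpa [smul_eq_mul, ← add_mul, hpq] using this
    have hmem : max (p • x + q • y) τ₀ ∈ Set.Icc τ₀ b := by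
      constructor
      · exact le_max_right _ _
      · exact le_trans hmaxle hcomb.2
    calc h (p • x + q • y) = E (max (p • x + q • y) τ₀) := rfl
      _ ≤ E (p • max x τ₀ + q • max y τ₀) := hEmono hmem hcomb hmaxle
      _ ≤ p • E (max x τ₀) + q • E (max y τ₀) :=
          hEconv.2 (hIccsub' hx') (hIccsub' hy') hp hq hpq
      _ = p • h x + q • h y := rfl
  have hhmono : MonotoneOn h S := by
    intro x hx y hy hxy
    exact hEmono (hmaxS x hx) (hmaxS y hy) (max_le_max hxy le_rfl)
  have hhlef : ∀ z ∈ S, h z ≤ f z := by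
    intro z hz
    rcases le_or_gt τ₀ z with hzl | hzl
    · have : max z τ₀ = z := max_eq_left hzl
      rw [hh]; simp only [this]
      exact hE_le_f z hz
    · have : max z τ₀ = τ₀ := max_eq_right hzl.le
      rw [hh]; simp only [this]
      have h1 : E τ₀ ≤ E z := hEanti ⟨hz.1, hzl.le⟩ ⟨hτ₀S.1, le_refl τ₀⟩ hzl.le
      exact le_trans h1 (hE_le_f z hz)
  have hhB : ∀ τ, h τ ∈ B τ := fun τ => ⟨h, hhconv, hhmono, hhlef, rfl⟩
  constructor
  · -- on [τ₀, b] : monConvEnv = E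
    intro τ hτ
    have hτS : τ ∈ S := hIccsub' hτ
    apply le_antisymm
    · rw [hMB]
      refine csSup_le ⟨c, hconstB τ⟩ ?_
      rintro y ⟨g, hg, _, hgf, rfl⟩
      exact hle_E g hg hgf τ hτS
    · have : h τ = E τ := by
        rw [hh]; simp [max_eq_left hτ.1]
      rw [hMB, ← this]
      exact le_csSup (hbddB τ hτS) (hhB τ)
  · -- on [a, τ₀] : monConvEnv = E τ₀
    intro τ hτ
    have hτS : τ ∈ S := ⟨hτ.1, le_trans hτ.2 hτ₀S.2⟩
    apply le_antisymm
    · rw [hMB]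
      refine csSup_le ⟨c, hconstB τ⟩ ?_
      rintro y ⟨g, hg, hgm, hgf, rfl⟩
      calc g τ ≤ g τ₀ := hgm hτS hτ₀S hτ.2
        _ ≤ E τ₀ := hle_E g hg hgf τ₀ hτ₀S
    · have : h τ = E τ₀ := by
        rw [hh]; simp [max_eq_right hτ.2]
      rw [hMB, ← this]
      exact le_csSup (hbddB τ hτS) (hhB τ)
end

section
/- Let a < b be real numbers and let g, h : [a,b] → ℝ be continuous functions, differentiable on the open interval (a,b), such that g is convex on [a,b], h is concave on [a,b], g(a) = h(a), and g(τ) ≤ h(τ) for every τ ∈ [a,b]. Then ∫ₐᵇ |g′(τ) − h′(τ)| dτ ≤ 2 · sup_{τ ∈ [a,b]} (h(τ) − g(τ)). -/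
open MeasureTheory intervalIntegral Set

/-- abstract form of the L¹ estimate (e:g3) from Step 3 of the proof of
Lemma 3.2. If `g` is convex, `h` is concave on `[a,b]`, both continuous on `[a,b]` and
differentiable on `(a,b)`, with `g(a) = h(a)` and `g ≤ h` on `[a,b]`, then
`∫ₐᵇ |g′ − h′| ≤ 2 sup_{[a,b]} (h − g)`. -/
theorem l1_estimate_deriv_convex_concave (a b : ℝ) (hab : a < b)
    (g h g' h' : ℝ → ℝ)
    (hgc : ContinuousOn g (Set.Icc a b)) (hhc : ContinuousOn h (Set.Icc a b))
    (hgconv : ConvexOn ℝ (Set.Icc a b) g) (hhconc : ConcaveOn ℝ (Set.Icc a b) h)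
    (hg' : ∀ τ ∈ Set.Ioo a b, HasDerivAt g (g' τ) τ)
    (hh' : ∀ τ ∈ Set.Ioo a b, HasDerivAt h (h' τ) τ)
    (hga : g a = h a)
    (hle : ∀ τ ∈ Set.Icc a b, g τ ≤ h τ) :
    ∫ τ in a..b, |g' τ - h' τ| ≤ 2 * sSup ((fun τ => h τ - g τ) '' Set.Icc a b) := by
  set φ : ℝ → ℝ := fun τ => g τ - h τ with hφdef
  set φ' : ℝ → ℝ := fun τ => g' τ - h' τ with hφ'def
  have hφconv : ConvexOn ℝ (Set.Icc a b) φ := hgconv.sub hhconc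
  have hφd : ∀ x ∈ Set.Ioo a b, HasDerivAt φ (φ' x) x := fun x hx =>
    (hg' x hx).sub (hh' x hx)
  have hφc : ContinuousOn φ (Set.Icc a b) := hgc.sub hhc
  have hφa : φ a = 0 := by simp [hφdef, hga]
  have hmono : ∀ x ∈ Set.Ioo a b, ∀ y ∈ Set.Ioo a b, x < y → φ' x ≤ φ' y := by
    intro x hx y hy hxy
    have h1 := hφconv.le_slope_of_hasDerivAt (Set.Ioo_subset_Icc_self hx)
      (Set.Ioo_subset_Icc_self hy) hxy (hφd x hx)
    have h2 := hφconv.slope_le_of_hasDerivAt (Set.Ioo_subset_Icc_self hx)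
      (Set.Ioo_subset_Icc_self hy) hxy (hφd y hy)
    exact h1.trans h2
  have himg : BddAbove ((fun τ => h τ - g τ) '' Set.Icc a b) :=
    (isCompact_Icc.image_of_continuousOn (hhc.sub hgc)).bddAbove
  have hsup0 : 0 ≤ sSup ((fun τ => h τ - g τ) '' Set.Icc a b) := by
    have : h a - g a ∈ (fun τ => h τ - g τ) '' Set.Icc a b :=
      ⟨a, ⟨le_refl a, hab.le⟩, rfl⟩
    have := le_csSup himg this
    linarith [hga ▸ this]
  by_cases hint : IntervalIntegrable φ' volume a b
  · -- main case
    set S : Set ℝ := {a} ∪ {x | x ∈ Set.Ioo a b ∧ φ' x < 0} with hSdef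
    have hSne : S.Nonempty := ⟨a, Or.inl rfl⟩
    have hSbdd : BddAbove S := by
      refine ⟨b, ?_⟩
      rintro x (rfl | hx)
      · exact hab.le
      · exact hx.1.2.le
    set c : ℝ := sSup S with hcdef
    have hac : a ≤ c := le_csSup hSbdd (Or.inl rfl)
    have hcb : c ≤ b := csSup_le hSne (by rintro x (rfl | hx); exacts [hab.le, hx.1.2.le])
    have hneg : ∀ t ∈ Set.Ioo a c, φ' t < 0 := by
      intro t ht
      obtain ⟨s, hs, hts⟩ := exists_lt_of_lt_csSup hSne ht.2
      rcases hs with rfl | hs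
      · exact absurd ht.1 (not_lt.mpr hts.le)
      · have htmem : t ∈ Set.Ioo a b := ⟨ht.1, hts.trans hs.1.2⟩
        exact lt_of_le_of_lt (hmono t htmem s hs.1 hts) hs.2
    have hpos : ∀ t ∈ Set.Ioo c b, 0 ≤ φ' t := by
      intro t ht
      by_contra hlt
      push_neg at hlt
      have : t ∈ S := Or.inr ⟨⟨lt_of_le_of_lt hac ht.1, ht.2⟩, hlt⟩
      exact absurd (le_csSup hSbdd this) (not_le.mpr ht.1)
    have hsub1 : Set.uIcc a c ⊆ Set.uIcc a b := by
      rw [Set.uIcc_of_le hac, Set.uIcc_of_le hab.le]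
      exact Set.Icc_subset_Icc le_rfl hcb
    have hsub2 : Set.uIcc c b ⊆ Set.uIcc a b := by
      rw [Set.uIcc_of_le hcb, Set.uIcc_of_le hab.le]
      exact Set.Icc_subset_Icc hac le_rfl
    have hint1 : IntervalIntegrable φ' volume a c := hint.mono_set hsub1
    have hint2 : IntervalIntegrable φ' volume c b := hint.mono_set hsub2
    have ftc1 : ∫ τ in a..c, φ' τ = φ c - φ a :=
      integral_eq_sub_of_hasDerivAt_of_le hac (hφc.mono (Set.Icc_subset_Icc le_rfl hcb))
        (fun x hx => hφd x ⟨hx.1, lt_of_lt_of_le hx.2 hcb⟩) hint1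
    have ftc2 : ∫ τ in c..b, φ' τ = φ b - φ c :=
      integral_eq_sub_of_hasDerivAt_of_le hcb (hφc.mono (Set.Icc_subset_Icc hac le_rfl))
        (fun x hx => hφd x ⟨lt_of_le_of_lt hac hx.1, hx.2⟩) hint2
    have aec : ∀ᵐ x : ℝ, x ≠ c := by
      refine MeasureTheory.mem_ae_iff.mpr ?_
      have : {x : ℝ | x ≠ c}ᶜ = {c} := by ext x; simp
      rw [this]; exact Real.volume_singleton
    have aeb : ∀ᵐ x : ℝ, x ≠ b := by
      refine MeasureTheory.mem_ae_iff.mpr ?_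
      have : {x : ℝ | x ≠ b}ᶜ = {b} := by ext x; simp
      rw [this]; exact Real.volume_singleton
    have eq1 : ∫ τ in a..c, |φ' τ| = ∫ τ in a..c, -φ' τ := by
      refine intervalIntegral.integral_congr_ae ?_
      filter_upwards [aec] with x hx hmem
      rw [Set.uIoc_of_le hac] at hmem
      have : x ∈ Set.Ioo a c := ⟨hmem.1, lt_of_le_of_ne hmem.2 hx⟩
      exact abs_of_neg (hneg x this)
    have eq2 : ∫ τ in c..b, |φ' τ| = ∫ τ in c..b, φ' τ := by
      refine intervalIntegral.integral_congr_ae ?_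
      filter_upwards [aeb] with x hx hmem
      rw [Set.uIoc_of_le hcb] at hmem
      have : x ∈ Set.Ioo c b := ⟨hmem.1, lt_of_le_of_ne hmem.2 hx⟩
      exact abs_of_nonneg (hpos x this)
    have hsplit : ∫ τ in a..b, |φ' τ| = (∫ τ in a..c, |φ' τ|) + ∫ τ in c..b, |φ' τ| :=
      (intervalIntegral.integral_add_adjacent_intervals hint1.abs hint2.abs).symm
    have key : ∫ τ in a..b, |φ' τ| = φ b - 2 * φ c := by
      rw [hsplit, eq1, eq2, intervalIntegral.integral_neg, ftc1, ftc2, hφa]; ring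
    have hφb : φ b ≤ 0 := by
      have := hle b ⟨hab.le, le_refl b⟩
      simp [hφdef]; linarith
    have hφcle : -φ c ≤ sSup ((fun τ => h τ - g τ) '' Set.Icc a b) := by
      have hmem : h c - g c ∈ (fun τ => h τ - g τ) '' Set.Icc a b := ⟨c, ⟨hac, hcb⟩, rfl⟩
      have := le_csSup himg hmem
      simp only [hφdef]; linarith
    calc ∫ τ in a..b, |g' τ - h' τ| = φ b - 2 * φ c := key
      _ ≤ 2 * sSup ((fun τ => h τ - g τ) '' Set.Icc a b) := by linarith
  · -- non-integrable case: the interval integral is 0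
    have hnint : ¬ IntervalIntegrable (fun τ => |φ' τ|) volume a b := by
      intro habs
      apply hint
      rw [intervalIntegrable_iff_integrableOn_Ioc_of_le hab.le] at habs ⊢
      have hmeas : AEStronglyMeasurable φ' (volume.restrict (Set.Ioc a b)) := by
        have hd : ∀ x ∈ Set.Ioo a b, φ' x = deriv φ x := fun x hx => (hφd x hx).deriv.symm
        have haeb : ∀ᵐ x ∂(volume.restrict (Set.Ioc a b)), x ≠ b := by
          refine MeasureTheory.ae_restrict_of_ae ?_
          refine MeasureTheory.mem_ae_iff.mpr ?_
          have : {x : ℝ | x ≠ b}ᶜ = {b} := by ext x; simp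
          rw [this]; exact Real.volume_singleton
        have hmem : ∀ᵐ x ∂(volume.restrict (Set.Ioc a b)), x ∈ Set.Ioc a b :=
          MeasureTheory.ae_restrict_mem measurableSet_Ioc
        refine ((measurable_deriv φ).aestronglyMeasurable.restrict).congr ?_
        filter_upwards [haeb, hmem] with x hx hmem'
        exact (hd x ⟨hmem'.1, lt_of_le_of_ne hmem'.2 hx⟩).symm
      exact ⟨hmeas, habs.hasFiniteIntegral.congr' (by
        filter_upwards with x; simp [abs_abs])⟩
    have : ∫ τ in a..b, |φ' τ| = 0 := intervalIntegral.integral_undef hnint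
    rw [show (fun τ => |g' τ - h' τ|) = fun τ => |φ' τ| from rfl] at *
    rw [this]
    linarith
end
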